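/- arXiv:1808.05213 — 7 statements merged into one kernel-verified Lean document; each statement's English description precedes it below -/
import Mathlib

section
/- Let L be an n×n Latin square and let S be a set of n cells of L. Then S is a 3-dominating set of the Latin square graph L_3(L,n) if and only if S is a transversal of L (a set of n cells with exactly one in each row, one in each column, and containing each symbol exactly once). -/
def IsLatin (n : ℕ) (L : Fin n → Fin n → Fin n) : Prop :=
  (∀ i, Function.Bijective (L i)) ∧ (∀ j, Function.Bijective fun i => L i j)

def latinGraph (n : ℕ) (L : Fin n → Fin n → Fin n) : SimpleGraph (Fin n × Fin n) :=
  SimpleGraph.fromRel fun a b => a.1 = b.1 ∨ a.2 = b.2 ∨ L a.1 a.2 = L b.1 b.2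

def IsKDominating {V : Type*} (G : SimpleGraph V) (k : ℕ) (S : Set V) : Prop :=
  ∀ v ∉ S, k ≤ (S ∩ G.neighborSet v).ncard

def IsTransversal (n : ℕ) (L : Fin n → Fin n → Fin n) (S : Set (Fin n × Fin n)) : Prop :=
  (∀ i : Fin n, ∃! c, c ∈ S ∧ c.1 = i) ∧
  (∀ j : Fin n, ∃! c, c ∈ S ∧ c.2 = j) ∧
  (∀ s : Fin n, ∃! c, c ∈ S ∧ L c.1 c.2 = s)

def IsQuasiTransversal (n : ℕ) (L : Fin n → Fin n → Fin n) (S : Set (Fin n × Fin n)) : Prop :=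
  (∃ i0, ({c ∈ S | c.1 = i0}).ncard = 2 ∧ ∀ i, i ≠ i0 → ({c ∈ S | c.1 = i}).ncard = 1) ∧
  (∃ j0, ({c ∈ S | c.2 = j0}).ncard = 2 ∧ ∀ j, j ≠ j0 → ({c ∈ S | c.2 = j}).ncard = 1) ∧
  (∃ s0, ({c ∈ S | L c.1 c.2 = s0}).ncard = 2 ∧ ∀ s, s ≠ s0 → ({c ∈ S | L c.1 c.2 = s}).ncard = 1)

def IsPartialTransversal (n : ℕ) (L : Fin n → Fin n → Fin n) (S : Set (Fin n × Fin n)) : Prop :=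
  ∀ a ∈ S, ∀ b ∈ S, a ≠ b → a.1 ≠ b.1 ∧ a.2 ≠ b.2 ∧ L a.1 a.2 ≠ L b.1 b.2

def IsKPlex (n : ℕ) (L : Fin n → Fin n → Fin n) (k : ℕ) (S : Set (Fin n × Fin n)) : Prop :=
  (∀ i, ({c ∈ S | c.1 = i}).ncard = k) ∧ (∀ j, ({c ∈ S | c.2 = j}).ncard = k) ∧
  (∀ s, ({c ∈ S | L c.1 c.2 = s}).ncard = k)

noncomputable def gamma3 (n : ℕ) (L : Fin n → Fin n → Fin n) : ℕ :=
  sInf {m | ∃ S : Set (Fin n × Fin n), IsKDominating (latinGraph n L) 3 S ∧ S.ncard = m}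

noncomputable def domatic3 (n : ℕ) (L : Fin n → Fin n → Fin n) : ℕ :=
  sSup {t | ∃ P : Fin t → Set (Fin n × Fin n),
    (Pairwise fun a b => Disjoint (P a) (P b)) ∧ (⋃ i, P i) = Set.univ ∧
    ∀ i, IsKDominating (latinGraph n L) 3 (P i)}

lemma adj_iff (n : ℕ) (L : Fin n → Fin n → Fin n) (a b : Fin n × Fin n) :
    (latinGraph n L).Adj a b ↔
      a ≠ b ∧ (a.1 = b.1 ∨ a.2 = b.2 ∨ L a.1 a.2 = L b.1 b.2) := by
  simp only [latinGraph, SimpleGraph.fromRel_adj]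
  constructor
  · rintro ⟨h, h2 | h2⟩
    · exact ⟨h, h2⟩
    · exact ⟨h, by rcases h2 with h2 | h2 | h2 <;> [left; (right; left); (right; right)] <;>
        exact h2.symm⟩
  · rintro ⟨h, h2⟩
    exact ⟨h, Or.inl h2⟩

lemma sum_fiber {n : ℕ} (S : Set (Fin n × Fin n)) (f : Fin n × Fin n → Fin n) :
    ∑ x : Fin n, ({c ∈ S | f c = x}).ncard = S.ncard := by
  classical
  rw [Set.ncard_eq_toFinset_card' S,
    Finset.card_eq_sum_card_fiberwise (f := f) (t := Finset.univ) (fun x _ => Finset.mem_univ _)]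
  refine Finset.sum_congr rfl fun x _ => ?_
  rw [Set.ncard_eq_toFinset_card']
  congr 1
  ext c
  simp

lemma all_one {n : ℕ} (g : Fin n → ℕ) (hsum : ∑ i, g i = n) (h1 : ∀ i, 1 ≤ g i) (i : Fin n) :
    g i = 1 := by
  by_contra h
  have h2 : 2 ≤ g i := by have := h1 i; omega
  have hle : ∑ j ∈ Finset.univ.erase i, 1 ≤ ∑ j ∈ Finset.univ.erase i, g j :=
    Finset.sum_le_sum fun j _ => h1 j
  have hadd : g i + ∑ j ∈ Finset.univ.erase i, g j = ∑ j, g j :=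
    Finset.add_sum_erase Finset.univ g (Finset.mem_univ i)
  have hc : ∑ j ∈ Finset.univ.erase i, (1:ℕ) = n - 1 := by
    simp [Finset.card_erase_of_mem]
  have hn : 1 ≤ n := i.pos
  omega

lemma ncard_one_exu {n : ℕ} {S : Set (Fin n × Fin n)} {p : Fin n × Fin n → Prop}
    (h : ({c ∈ S | p c}).ncard = 1) : ∃! c, c ∈ S ∧ p c := by
  obtain ⟨a, ha⟩ := Set.ncard_eq_one.mp h
  have hm : a ∈ {c ∈ S | p c} := ha ▸ rfl
  refine ⟨a, hm, fun b hb => ?_⟩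
  have : b ∈ {c ∈ S | p c} := hb
  rw [ha] at this
  exact this

theorem stmt4 (n : ℕ) (L : Fin n → Fin n → Fin n) (hL : IsLatin n L)
    (S : Set (Fin n × Fin n)) (hcard : S.ncard = n) :
    IsKDominating (latinGraph n L) 3 S ↔ IsTransversal n L S := by
  constructor
  · intro hdom
    -- fiber counts
    set r : Fin n → ℕ := fun i => ({c ∈ S | c.1 = i}).ncard with hr
    set cc : Fin n → ℕ := fun j => ({c ∈ S | c.2 = j}).ncard with hcc
    set t : Fin n → ℕ := fun s => ({c ∈ S | L c.1 c.2 = s}).ncard with ht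
    have hrsum : ∑ i, r i = n := by rw [hr, sum_fiber S Prod.fst, hcard]
    have hcsum : ∑ j, cc j = n := by rw [hcc, sum_fiber S Prod.snd, hcard]
    have htsum : ∑ s, t s = n := by
      rw [ht, sum_fiber S (fun c => L c.1 c.2), hcard]
    -- generic bound: if v ∉ S then neighborhood is inside union of three fibers
    have key : ∀ v : Fin n × Fin n, v ∉ S →
        3 ≤ ({c ∈ S | c.1 = v.1} ∪ {c ∈ S | c.2 = v.2} ∪
             {c ∈ S | L c.1 c.2 = L v.1 v.2}).ncard := by
      intro v hv
      refine le_trans (hdom v hv) (Set.ncard_le_ncard ?_ (Set.toFinite _))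
      rintro c ⟨hcS, hadj⟩
      have := (adj_iff n L v c).mp hadj
      rcases this.2 with h | h | h
      · exact Or.inl (Or.inl ⟨hcS, h.symm⟩)
      · exact Or.inl (Or.inr ⟨hcS, h.symm⟩)
      · exact Or.inr ⟨hcS, h.symm⟩
    have keysum : ∀ v : Fin n × Fin n, v ∉ S →
        3 ≤ r v.1 + cc v.2 + t (L v.1 v.2) := by
      intro v hv
      refine le_trans (key v hv) ?_
      refine le_trans (Set.ncard_union_le _ _) ?_
      exact add_le_add (Set.ncard_union_le _ _) le_rfl
    -- rows nonempty
    have hrow : ∀ i, 1 ≤ r i := by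
      intro i0
      by_contra h
      have h0 : r i0 = 0 := by omega
      have hempty : {c ∈ S | c.1 = i0} = ∅ :=
        Set.ncard_eq_zero (Set.toFinite _) |>.mp h0
      have hvnot : ∀ j, (i0, j) ∉ S := by
        intro j hj
        exact absurd (Set.eq_empty_iff_forall_notMem.mp hempty (i0, j)) (by simp [hj])
      have hbound : ∀ j : Fin n, 3 ≤ cc j + t (L i0 j) := by
        intro j
        have h3 := hdom (i0, j) (hvnot j)
        have hsub : S ∩ (latinGraph n L).neighborSet (i0, j) ⊆
            {c ∈ S | c.2 = j} ∪ {c ∈ S | L c.1 c.2 = L i0 j} := by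
          rintro c ⟨hcS, hadj⟩
          have hc := (adj_iff n L (i0, j) c).mp hadj
          rcases hc.2 with h' | h' | h'
          · exact absurd (Set.eq_empty_iff_forall_notMem.mp hempty c) (by simp [hcS, h'.symm])
          · exact Or.inl ⟨hcS, h'.symm⟩
          · exact Or.inr ⟨hcS, h'.symm⟩
        have := le_trans h3 (le_trans (Set.ncard_le_ncard hsub (Set.toFinite _))
          (Set.ncard_union_le _ _))
        exact this
      have hsum3 : 3 * n ≤ ∑ j : Fin n, (cc j + t (L i0 j)) := by
        calc 3 * n = ∑ _j : Fin n, 3 := by simp [mul_comm]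
        _ ≤ _ := Finset.sum_le_sum fun j _ => hbound j
      rw [Finset.sum_add_distrib, hcsum] at hsum3
      have hbij := hL.1 i0
      rw [Function.Bijective.sum_comp hbij t, htsum] at hsum3
      have : n = 0 := by omega
      exact absurd i0.pos (by omega)
    -- columns nonempty
    have hcol : ∀ j, 1 ≤ cc j := by
      intro j0
      by_contra h
      have h0 : cc j0 = 0 := by omega
      have hempty : {c ∈ S | c.2 = j0} = ∅ :=
        Set.ncard_eq_zero (Set.toFinite _) |>.mp h0
      have hvnot : ∀ i, (i, j0) ∉ S := by
        intro i hi
        exact absurd (Set.eq_empty_iff_forall_notMem.mp hempty (i, j0)) (by simp [hi])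
      have hbound : ∀ i : Fin n, 3 ≤ r i + t (L i j0) := by
        intro i
        have h3 := hdom (i, j0) (hvnot i)
        have hsub : S ∩ (latinGraph n L).neighborSet (i, j0) ⊆
            {c ∈ S | c.1 = i} ∪ {c ∈ S | L c.1 c.2 = L i j0} := by
          rintro c ⟨hcS, hadj⟩
          have hc := (adj_iff n L (i, j0) c).mp hadj
          rcases hc.2 with h' | h' | h'
          · exact Or.inl ⟨hcS, h'.symm⟩
          · exact absurd (Set.eq_empty_iff_forall_notMem.mp hempty c) (by simp [hcS, h'.symm])
          · exact Or.inr ⟨hcS, h'.symm⟩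
        exact le_trans h3 (le_trans (Set.ncard_le_ncard hsub (Set.toFinite _))
          (Set.ncard_union_le _ _))
      have hsum3 : 3 * n ≤ ∑ i : Fin n, (r i + t (L i j0)) := by
        calc 3 * n = ∑ _i : Fin n, 3 := by simp [mul_comm]
        _ ≤ _ := Finset.sum_le_sum fun i _ => hbound i
      rw [Finset.sum_add_distrib, hrsum] at hsum3
      have hbij := hL.2 j0
      rw [Function.Bijective.sum_comp hbij t, htsum] at hsum3
      exact absurd j0.pos (by omega)
    -- symbols nonempty
    have hsym : ∀ s, 1 ≤ t s := by
      intro s0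
      by_contra h
      have h0 : t s0 = 0 := by omega
      have hempty : {c ∈ S | L c.1 c.2 = s0} = ∅ :=
        Set.ncard_eq_zero (Set.toFinite _) |>.mp h0
      -- for each row i, the unique column with symbol s0
      set e : Fin n → Fin n := fun i => (Equiv.ofBijective (L i) (hL.1 i)).symm s0 with he
      have heL : ∀ i, L i (e i) = s0 := fun i =>
        (Equiv.ofBijective (L i) (hL.1 i)).apply_symm_apply s0
      have hvnot : ∀ i, (i, e i) ∉ S := by
        intro i hi
        exact absurd (Set.eq_empty_iff_forall_notMem.mp hempty (i, e i))
          (by simp [hi, heL i])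
      have hbound : ∀ i : Fin n, 3 ≤ r i + cc (e i) := by
        intro i
        have h3 := hdom (i, e i) (hvnot i)
        have hsub : S ∩ (latinGraph n L).neighborSet (i, e i) ⊆
            {c ∈ S | c.1 = i} ∪ {c ∈ S | c.2 = e i} := by
          rintro c ⟨hcS, hadj⟩
          have hc := (adj_iff n L (i, e i) c).mp hadj
          rcases hc.2 with h' | h' | h'
          · exact Or.inl ⟨hcS, h'.symm⟩
          · exact Or.inr ⟨hcS, h'.symm⟩
          · refine absurd (Set.eq_empty_iff_forall_notMem.mp hempty c) ?_
            simp only [Set.mem_setOf_eq, not_not]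
            exact ⟨hcS, by rw [← h', heL i]⟩
        exact le_trans h3 (le_trans (Set.ncard_le_ncard hsub (Set.toFinite _))
          (Set.ncard_union_le _ _))
      have hebij : Function.Bijective e := by
        refine Finite.injective_iff_bijective.mp ?_
        intro i i' hii
        have : L i (e i) = L i' (e i) := by rw [heL i, hii, heL i']
        exact hL.2 (e i) |>.injective this
      have hsum3 : 3 * n ≤ ∑ i : Fin n, (r i + cc (e i)) := by
        calc 3 * n = ∑ _i : Fin n, 3 := by simp [mul_comm]
        _ ≤ _ := Finset.sum_le_sum fun i _ => hbound i
      rw [Finset.sum_add_distrib, hrsum, Function.Bijective.sum_comp hebij cc, hcsum] at hsum3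
      exact absurd s0.pos (by omega)
    exact ⟨fun i => ncard_one_exu (all_one r hrsum hrow i),
      fun j => ncard_one_exu (all_one cc hcsum hcol j),
      fun s => ncard_one_exu (all_one t htsum hsym s)⟩
  · rintro ⟨hrow, hcol, hsym⟩ v hv
    obtain ⟨a, ⟨haS, ha1⟩, -⟩ := hrow v.1
    obtain ⟨b, ⟨hbS, hb2⟩, -⟩ := hcol v.2
    obtain ⟨d, ⟨hdS, hdL⟩, -⟩ := hsym (L v.1 v.2)
    have hav : a ≠ v := fun h => hv (h ▸ haS)
    have hbv : b ≠ v := fun h => hv (h ▸ hbS)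
    have hdv : d ≠ v := fun h => hv (h ▸ hdS)
    have hab : a ≠ b := by
      intro h
      exact hav (Prod.ext ha1 (h ▸ hb2))
    have had : a ≠ d := by
      intro h
      apply hav
      have hdl' : L a.1 a.2 = L v.1 v.2 := h ▸ hdL
      rw [ha1] at hdl'
      exact Prod.ext ha1 ((hL.1 v.1).injective hdl')
    have hbd : b ≠ d := by
      intro h
      apply hbv
      have hdl' : L b.1 b.2 = L v.1 v.2 := h ▸ hdL
      rw [hb2] at hdl'
      have h1 : b.1 = v.1 := (hL.2 v.2).injective hdl'
      exact Prod.ext h1 hb2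
    have hset : ({a, b, d} : Set (Fin n × Fin n)) ⊆ S ∩ (latinGraph n L).neighborSet v := by
      rintro c (rfl | rfl | rfl)
      · exact ⟨haS, (adj_iff n L v c).mpr ⟨fun h => hav h.symm, Or.inl ha1.symm⟩⟩
      · exact ⟨hbS, (adj_iff n L v c).mpr ⟨fun h => hbv h.symm, Or.inr (Or.inl hb2.symm)⟩⟩
      · exact ⟨hdS, (adj_iff n L v c).mpr ⟨fun h => hdv h.symm, Or.inr (Or.inr hdL.symm)⟩⟩
    calc (3:ℕ) = ({a, b, d} : Set (Fin n × Fin n)).ncard := by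
          rw [Set.ncard_eq_three.mpr ⟨a, b, d, hab, had, hbd, rfl⟩]
    _ ≤ _ := Set.ncard_le_ncard hset (Set.toFinite _)
end

section
/- For any Latin square L of order n, the 3-domatic number of L_3(L,n) is at most n; moreover d_3(L_3(L,n)) = n if and only if L can be decomposed into n pairwise disjoint transversals. -/
section Aux
open Finset
open scoped Classical

variable {n : ℕ} {L : Fin n → Fin n → Fin n}

lemma lg_adj {a b : Fin n × Fin n} :
    (latinGraph n L).Adj a b ↔
      a ≠ b ∧ (a.1 = b.1 ∨ a.2 = b.2 ∨ L a.1 a.2 = L b.1 b.2) := by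
  show (SimpleGraph.fromRel _).Adj a b ↔ _
  rw [SimpleGraph.fromRel_adj]
  constructor
  · rintro ⟨h1, h | h⟩
    · exact ⟨h1, h⟩
    · refine ⟨h1, ?_⟩
      rcases h with h | h | h
      · exact Or.inl h.symm
      · exact Or.inr (Or.inl h.symm)
      · exact Or.inr (Or.inr h.symm)
  · rintro ⟨h1, h2⟩; exact ⟨h1, Or.inl h2⟩

lemma lg_adj' {a b : Fin n × Fin n} (hab : a ≠ b)
    (h : a.1 = b.1 ∨ a.2 = b.2 ∨ L a.1 a.2 = L b.1 b.2) :
    (latinGraph n L).Adj a b := lg_adj.2 ⟨hab, h⟩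


lemma deg_eq (hL : IsLatin n L) (v : Fin n × Fin n) :
    (Finset.univ.filter fun w => (latinGraph n L).Adj v w).card = 3 * (n - 1) := by
  classical
  set R : Finset (Fin n × Fin n) :=
    Finset.univ.filter (fun w => w.1 = v.1 ∧ w.2 ≠ v.2) with hR
  set C : Finset (Fin n × Fin n) :=
    Finset.univ.filter (fun w => w.2 = v.2 ∧ w.1 ≠ v.1) with hC
  set Sy : Finset (Fin n × Fin n) :=
    Finset.univ.filter (fun w => L w.1 w.2 = L v.1 v.2 ∧ w.1 ≠ v.1) with hSy
  have hunion : (Finset.univ.filter fun w => (latinGraph n L).Adj v w) = R ∪ (C ∪ Sy) := by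
    ext w
    simp only [hR, hC, hSy, Finset.mem_union, Finset.mem_filter, Finset.mem_univ, true_and,
      lg_adj, ne_eq, Prod.ext_iff, not_and]
    constructor
    · rintro ⟨h1, h2⟩
      by_cases ha : w.1 = v.1
      · left
        refine ⟨ha, fun hb => (h1 ha.symm hb.symm).elim⟩
      · right
        rcases h2 with h | h | h
        · exact absurd h.symm ha
        · exact Or.inl ⟨h.symm, ha⟩
        · exact Or.inr ⟨h.symm, ha⟩
    · rintro (⟨h1, h2⟩ | ⟨h1, h2⟩ | ⟨h1, h2⟩)
      · exact ⟨fun _ hb => h2 hb.symm, Or.inl h1.symm⟩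
      · exact ⟨fun ha _ => h2 ha.symm, Or.inr (Or.inl h1.symm)⟩
      · exact ⟨fun ha _ => h2 ha.symm, Or.inr (Or.inr h1.symm)⟩
  have hdisj1 : Disjoint R (C ∪ Sy) := by
    simp only [Finset.disjoint_left, hR, hC, hSy, Finset.mem_union, Finset.mem_filter,
      Finset.mem_univ, true_and]
    rintro w ⟨h1, _⟩ (⟨_, h2⟩ | ⟨_, h2⟩) <;> exact h2 h1
  have hdisj2 : Disjoint C Sy := by
    simp only [Finset.disjoint_left, hC, hSy, Finset.mem_filter, Finset.mem_univ, true_and]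
    rintro w ⟨h1, h2⟩ ⟨h3, _⟩
    apply h2
    rw [h1] at h3
    exact (hL.2 v.2).1 h3
  have hcardR : R.card = n - 1 := by
    have : R = (Finset.univ.erase v.2).image (fun j => (v.1, j)) := by
      ext w
      simp only [hR, Finset.mem_filter, Finset.mem_univ, true_and, Finset.mem_image,
        Finset.mem_erase]
      constructor
      · rintro ⟨h1, h2⟩; exact ⟨w.2, ⟨h2, trivial⟩, by rw [← h1]⟩
      · rintro ⟨j, ⟨hj, _⟩, rfl⟩; exact ⟨rfl, hj⟩
    rw [this, Finset.card_image_of_injective _ (fun a b h => (Prod.mk.injEq _ _ _ _ ▸ h).2),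
      Finset.card_erase_of_mem (Finset.mem_univ _), Finset.card_univ, Fintype.card_fin]
  have hcardC : C.card = n - 1 := by
    have : C = (Finset.univ.erase v.1).image (fun i => (i, v.2)) := by
      ext w
      simp only [hC, Finset.mem_filter, Finset.mem_univ, true_and, Finset.mem_image,
        Finset.mem_erase]
      constructor
      · rintro ⟨h1, h2⟩; exact ⟨w.1, ⟨h2, trivial⟩, by rw [← h1]⟩
      · rintro ⟨i, ⟨hi, _⟩, rfl⟩; exact ⟨rfl, hi⟩
    rw [this, Finset.card_image_of_injective _ (fun a b h => (Prod.mk.injEq _ _ _ _ ▸ h).1),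
      Finset.card_erase_of_mem (Finset.mem_univ _), Finset.card_univ, Fintype.card_fin]
  have hcardSy : Sy.card = n - 1 := by
    have : Sy = (Finset.univ.erase v.1).image
        (fun i => (i, (Equiv.ofBijective _ (hL.1 i)).symm (L v.1 v.2))) := by
      ext w
      simp only [hSy, Finset.mem_filter, Finset.mem_univ, true_and, Finset.mem_image,
        Finset.mem_erase]
      constructor
      · rintro ⟨h1, h2⟩
        refine ⟨w.1, ⟨h2, trivial⟩, ?_⟩
        have : (Equiv.ofBijective _ (hL.1 w.1)).symm (L v.1 v.2) = w.2 := by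
          rw [← h1]; exact (Equiv.ofBijective _ (hL.1 w.1)).symm_apply_apply w.2
        rw [this]
      · rintro ⟨i, ⟨hi, _⟩, rfl⟩
        refine ⟨?_, hi⟩
        exact (Equiv.ofBijective _ (hL.1 i)).apply_symm_apply (L v.1 v.2)
    rw [this, Finset.card_image_of_injective _ (fun a b h => (Prod.mk.injEq _ _ _ _ ▸ h).1),
      Finset.card_erase_of_mem (Finset.mem_univ _), Finset.card_univ, Fintype.card_fin]
  rw [hunion, Finset.card_union_of_disjoint hdisj1, Finset.card_union_of_disjoint hdisj2,
    hcardR, hcardC, hcardSy]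
  ring


lemma sum_swap_adj (s : Finset (Fin n × Fin n)) :
    ∑ v ∈ sᶜ, (s.filter fun c => (latinGraph n L).Adj v c).card =
      ∑ c ∈ s, (sᶜ.filter fun w => (latinGraph n L).Adj c w).card := by
  classical
  simp only [Finset.card_filter]
  rw [Finset.sum_comm]
  congr 1
  ext c
  congr 1
  ext v
  simp only [SimpleGraph.adj_comm]

lemma ncard_inter_eq (S : Set (Fin n × Fin n)) (v : Fin n × Fin n) :
    (S ∩ (latinGraph n L).neighborSet v).ncard =
      (S.toFinite.toFinset.filter fun w => (latinGraph n L).Adj v w).card := by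
  classical
  rw [← Set.ncard_coe_finset]
  congr 1
  ext w
  simp only [Finset.coe_filter, Set.mem_setOf_eq, Set.mem_inter_iff, Set.Finite.mem_toFinset,
    SimpleGraph.mem_neighborSet]

lemma dominating_card (hL : IsLatin n L) {S : Set (Fin n × Fin n)}
    (hS : IsKDominating (latinGraph n L) 3 S) :
    n ≤ S.ncard ∧ (S.ncard = n →
      ∀ a ∈ S, ∀ b ∈ S, a ≠ b → ¬(latinGraph n L).Adj a b) := by
  classical
  set s := S.toFinite.toFinset with hs_def
  have hmem : ∀ w, w ∈ s ↔ w ∈ S := fun w => Set.Finite.mem_toFinset _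
  have hcard : S.ncard = s.card := Set.ncard_eq_toFinset_card _ _
  have hdom : ∀ v ∈ sᶜ, 3 ≤ (s.filter fun c => (latinGraph n L).Adj v c).card := by
    intro v hv
    rw [Finset.mem_compl, hmem] at hv
    have := hS v hv
    rwa [ncard_inter_eq] at this
  have h1 : sᶜ.card * 3 ≤ ∑ v ∈ sᶜ, (s.filter fun c => (latinGraph n L).Adj v c).card := by
    simpa using Finset.card_nsmul_le_sum sᶜ _ 3 hdom
  have h3 : ∀ c, (sᶜ.filter fun w => (latinGraph n L).Adj c w).card ≤ 3 * (n - 1) := by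
    intro c
    rw [← deg_eq hL c]
    exact Finset.card_le_card (Finset.filter_subset_filter _ (Finset.subset_univ _))
  have h2 : ∑ c ∈ s, (sᶜ.filter fun w => (latinGraph n L).Adj c w).card ≤ s.card * (3 * (n-1)) := by
    simpa using Finset.sum_le_card_nsmul s _ (3 * (n-1)) (fun c _ => h3 c)
  have hcompl : sᶜ.card = n * n - s.card := by
    rw [Finset.card_compl]
    congr 1
    simp
  have hle : s.card ≤ n * n := by
    have h := Finset.card_le_card (Finset.subset_univ s)
    rw [Finset.card_univ] at h
    have h2 : Fintype.card (Fin n × Fin n) = n * n := by simp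
    omega
  have hmain : (n * n - s.card) * 3 ≤ s.card * (3 * (n - 1)) :=
    le_trans (hcompl ▸ h1) (le_trans (le_of_eq (sum_swap_adj s)) h2)
  constructor
  · rcases Nat.eq_zero_or_pos n with hn | hn
    · simp [hn]
    have e1 : n * n - s.card ≤ s.card * (n - 1) := by
      have : (n * n - s.card) * 3 ≤ (s.card * (n-1)) * 3 := by
        calc (n * n - s.card) * 3 ≤ s.card * (3 * (n - 1)) := hmain
        _ = s.card * (n-1) * 3 := by ring
      exact Nat.le_of_mul_le_mul_right this (by norm_num)
    have e2 : n * n ≤ s.card * n := by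
      calc n * n = (n * n - s.card) + s.card := (Nat.sub_add_cancel hle).symm
      _ ≤ s.card * (n - 1) + s.card := by omega
      _ = s.card * ((n-1) + 1) := by ring
      _ = s.card * n := by rw [Nat.sub_add_cancel hn]
    rw [hcard]
    exact Nat.le_of_mul_le_mul_right (by calc n * n ≤ s.card * n := e2) hn
  · intro hn a ha b hb hab hadj
    have hkn : s.card = n := by rw [← hcard, hn]
    -- equality forces every summand to be maximal
    have hsum_ge : n * (3 * (n-1)) ≤
        ∑ c ∈ s, (sᶜ.filter fun w => (latinGraph n L).Adj c w).card := by
      have := le_trans (hcompl ▸ h1) (le_of_eq (sum_swap_adj s))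
      calc n * (3 * (n-1)) = (n * n - n) * 3 := by
            cases n with
            | zero => simp
            | succ m =>
              have h1 : (m+1) * (m+1) - (m+1) = (m+1) * m := by
                rw [Nat.mul_succ]
                omega
              simp only [Nat.succ_sub_one, h1]
              ring
        _ = (n * n - s.card) * 3 := by rw [hkn]
        _ ≤ _ := this
    have hall : ∀ c ∈ s, (sᶜ.filter fun w => (latinGraph n L).Adj c w).card = 3 * (n-1) := by
      by_contra hcon
      push_neg at hcon
      obtain ⟨c0, hc0, hne⟩ := hcon
      have hlt : (sᶜ.filter fun w => (latinGraph n L).Adj c0 w).card < 3 * (n-1) :=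
        lt_of_le_of_ne (h3 c0) hne
      have : ∑ c ∈ s, (sᶜ.filter fun w => (latinGraph n L).Adj c w).card
          < ∑ c ∈ s, 3 * (n-1) :=
        Finset.sum_lt_sum (fun c _ => h3 c) ⟨c0, hc0, hlt⟩
      rw [Finset.sum_const, smul_eq_mul, hkn] at this
      omega
    -- so all neighbors of a lie outside s, contradicting b ∈ s adjacent to a
    have hsub : (sᶜ.filter fun w => (latinGraph n L).Adj a w)
        ⊆ (Finset.univ.filter fun w => (latinGraph n L).Adj a w) :=
      Finset.filter_subset_filter _ (Finset.subset_univ _)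
    have heq : (sᶜ.filter fun w => (latinGraph n L).Adj a w)
        = (Finset.univ.filter fun w => (latinGraph n L).Adj a w) := by
      apply Finset.eq_of_subset_of_card_le hsub
      rw [deg_eq hL, hall a ((hmem a).2 ha)]
    have hbmem : b ∈ Finset.univ.filter fun w => (latinGraph n L).Adj a w := by
      simp [hadj]
    rw [← heq, Finset.mem_filter, Finset.mem_compl, hmem] at hbmem
    exact hbmem.1 hb


lemma exists_unique_of_inj {S : Set (Fin n × Fin n)} (f : (Fin n × Fin n) → Fin n)
    (hcard : S.ncard = n) (hinj : ∀ a ∈ S, ∀ b ∈ S, f a = f b → a = b) :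
    ∀ y, ∃! c, c ∈ S ∧ f c = y := by
  classical
  intro y
  set s := S.toFinite.toFinset with hs_def
  have hmem : ∀ w, w ∈ s ↔ w ∈ S := fun w => Set.Finite.mem_toFinset _
  have hkn : s.card = n := by rw [← Set.ncard_eq_toFinset_card _ _, hcard]
  have himg : s.image f = Finset.univ := by
    apply Finset.eq_univ_of_card
    rw [Finset.card_image_of_injOn, hkn, Fintype.card_fin]
    intro a ha b hb hfab
    exact hinj a ((hmem a).1 ha) b ((hmem b).1 hb) hfab
  have : y ∈ s.image f := by rw [himg]; exact Finset.mem_univ y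
  obtain ⟨c, hc, hfc⟩ := Finset.mem_image.1 this
  refine ⟨c, ⟨(hmem c).1 hc, hfc⟩, ?_⟩
  rintro d ⟨hd, hfd⟩
  exact hinj d hd c ((hmem c).1 hc) (by rw [hfd, hfc])

lemma indep_transversal (hL : IsLatin n L) {S : Set (Fin n × Fin n)}
    (hcard : S.ncard = n)
    (hind : ∀ a ∈ S, ∀ b ∈ S, a ≠ b → ¬(latinGraph n L).Adj a b) :
    IsTransversal n L S := by
  have key : ∀ a ∈ S, ∀ b ∈ S, a ≠ b →
      a.1 ≠ b.1 ∧ a.2 ≠ b.2 ∧ L a.1 a.2 ≠ L b.1 b.2 := by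
    intro a ha b hb hab
    have hna := hind a ha b hb hab
    refine ⟨?_, ?_, ?_⟩ <;> intro h <;> exact hna (lg_adj' hab (by tauto))
  refine ⟨?_, ?_, ?_⟩
  · exact exists_unique_of_inj (fun c => c.1) hcard (fun a ha b hb h => by
      by_contra hab; exact (key a ha b hb hab).1 h)
  · exact exists_unique_of_inj (fun c => c.2) hcard (fun a ha b hb h => by
      by_contra hab; exact (key a ha b hb hab).2.1 h)
  · exact exists_unique_of_inj (fun c => L c.1 c.2) hcard (fun a ha b hb h => by
      by_contra hab; exact (key a ha b hb hab).2.2 h)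

lemma transversal_dominating (hL : IsLatin n L) {S : Set (Fin n × Fin n)}
    (hT : IsTransversal n L S) : IsKDominating (latinGraph n L) 3 S := by
  intro v hv
  obtain ⟨r, ⟨hrS, hr1⟩, _⟩ := hT.1 v.1
  obtain ⟨c, ⟨hcS, hc2⟩, _⟩ := hT.2.1 v.2
  obtain ⟨t, ⟨htS, ht3⟩, _⟩ := hT.2.2 (L v.1 v.2)
  have hrv : r ≠ v := fun h => hv (h ▸ hrS)
  have hcv : c ≠ v := fun h => hv (h ▸ hcS)
  have htv : t ≠ v := fun h => hv (h ▸ htS)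
  have hrc : r ≠ c := by
    intro h
    apply hrv
    subst h
    exact Prod.ext hr1 hc2
  have hrt : r ≠ t := by
    intro h
    subst h
    apply hrv
    rw [hr1] at ht3
    have := (hL.1 v.1).1 ht3
    exact Prod.ext hr1 this
  have hct : c ≠ t := by
    intro h
    subst h
    apply hcv
    rw [hc2] at ht3
    have := (hL.2 v.2).1 ht3
    exact Prod.ext this hc2
  have hsub : ({r, c, t} : Set (Fin n × Fin n)) ⊆ S ∩ (latinGraph n L).neighborSet v := by
    intro x hx
    rcases hx with h | h | h
    · subst h; exact ⟨hrS, lg_adj' (Ne.symm hrv) (Or.inl hr1.symm)⟩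
    · subst h; exact ⟨hcS, lg_adj' (Ne.symm hcv) (Or.inr (Or.inl hc2.symm))⟩
    · simp only [Set.mem_singleton_iff] at h
      subst h; exact ⟨htS, lg_adj' (Ne.symm htv) (Or.inr (Or.inr ht3.symm))⟩
  have h3 : ({r, c, t} : Set (Fin n × Fin n)).ncard = 3 := by
    rw [Set.ncard_insert_of_notMem (by simp [hrc, hrt]) (Set.toFinite _),
      Set.ncard_pair hct]
  calc 3 = ({r, c, t} : Set (Fin n × Fin n)).ncard := h3.symm
    _ ≤ (S ∩ (latinGraph n L).neighborSet v).ncard :=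
        Set.ncard_le_ncard hsub (Set.toFinite _)


def domSet (n : ℕ) (L : Fin n → Fin n → Fin n) : Set ℕ :=
  {t | ∃ P : Fin t → Set (Fin n × Fin n),
    (Pairwise fun a b => Disjoint (P a) (P b)) ∧ (⋃ i, P i) = Set.univ ∧
    ∀ i, IsKDominating (latinGraph n L) 3 (P i)}

lemma domatic3_eq : domatic3 n L = sSup (domSet n L) := rfl

lemma partition_sum {t : ℕ} (P : Fin t → Set (Fin n × Fin n))
    (hdisj : Pairwise fun a b => Disjoint (P a) (P b))
    (huniv : (⋃ i, P i) = Set.univ) :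
    ∑ i, (P i).ncard = n * n := by
  classical
  have hdisjf : ∀ i ∈ (Finset.univ : Finset (Fin t)), ∀ j ∈ (Finset.univ : Finset (Fin t)),
      i ≠ j → Disjoint ((P i).toFinite.toFinset) ((P j).toFinite.toFinset) := by
    intro i _ j _ hij
    rw [Finset.disjoint_left]
    intro x hx hx'
    rw [Set.Finite.mem_toFinset] at hx hx'
    exact Set.disjoint_left.1 (hdisj hij) hx hx'
  have hb : Finset.univ.biUnion (fun i => (P i).toFinite.toFinset) = Finset.univ := by
    apply Finset.eq_univ_of_forall
    intro x
    rw [Finset.mem_biUnion]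
    have : x ∈ ⋃ i, P i := huniv ▸ Set.mem_univ x
    obtain ⟨i, hi⟩ := Set.mem_iUnion.1 this
    exact ⟨i, Finset.mem_univ i, (Set.Finite.mem_toFinset _).2 hi⟩
  have := Finset.card_biUnion hdisjf
  rw [hb, Finset.card_univ] at this
  have hc : Fintype.card (Fin n × Fin n) = n * n := by simp
  rw [hc] at this
  rw [this]
  exact Finset.sum_congr rfl fun i _ => Set.ncard_eq_toFinset_card _ _

lemma one_mem_domSet : 1 ∈ domSet n L := by
  refine ⟨fun _ => Set.univ, ?_, Set.iUnion_const _, ?_⟩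
  · intro a b hab
    exact absurd (Subsingleton.elim a b) hab
  · intro i v hv
    exact absurd (Set.mem_univ v) hv

lemma domSet_le (hL : IsLatin n L) (hn : 1 ≤ n) {t : ℕ} (ht : t ∈ domSet n L) : t ≤ n := by
  obtain ⟨P, hdisj, huniv, hdomP⟩ := ht
  have hsum := partition_sum P hdisj huniv
  have hge : ∀ i ∈ (Finset.univ : Finset (Fin t)), n ≤ (P i).ncard :=
    fun i _ => (dominating_card hL (hdomP i)).1
  have h1 : t * n ≤ ∑ i, (P i).ncard := by
    simpa using Finset.card_nsmul_le_sum Finset.univ _ n hge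
  rw [hsum] at h1
  exact Nat.le_of_mul_le_mul_right h1 hn

end Aux

theorem stmt7 (n : ℕ) (L : Fin n → Fin n → Fin n) (hL : IsLatin n L) :
    domatic3 n L ≤ n ∧
    (domatic3 n L = n ↔
      ∃ T : Fin n → Set (Fin n × Fin n),
        (Pairwise fun a b => Disjoint (T a) (T b)) ∧ (⋃ i, T i) = Set.univ ∧
        ∀ i, IsTransversal n L (T i)) := by
  classical
  by_cases hn0 : n = 0
  · subst hn0
    have hdom : domatic3 0 L = 0 := by
      rw [domatic3_eq]
      have hset : domSet 0 L = Set.univ := by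
        ext t
        simp only [Set.mem_univ, iff_true]
        refine ⟨fun _ => ∅, ?_, ?_, ?_⟩
        · intro a b _; exact disjoint_bot_left
        · exact Set.eq_univ_iff_forall.2 fun x => isEmptyElim x
        · intro i v _; exact isEmptyElim v
      rw [hset]
      have hnb : ¬ BddAbove (Set.univ : Set ℕ) := by
        rintro ⟨b, hb⟩
        have := hb (Set.mem_univ (b + 1))
        omega
      rw [csSup_of_not_bddAbove hnb, csSup_empty]
      rfl
    refine ⟨le_of_eq hdom, ?_⟩
    constructor
    · intro _
      refine ⟨fun i => i.elim0, fun a => a.elim0, ?_, fun i => i.elim0⟩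
      exact Set.eq_univ_iff_forall.2 fun x => isEmptyElim x
    · intro _
      exact hdom
  · have hn : 1 ≤ n := Nat.one_le_iff_ne_zero.2 hn0
    have hBdd : BddAbove (domSet n L) := ⟨n, fun t ht => domSet_le hL hn ht⟩
    have hne : (domSet n L).Nonempty := ⟨1, one_mem_domSet⟩
    have hle : domatic3 n L ≤ n := by
      rw [domatic3_eq]
      exact csSup_le hne fun t ht => domSet_le hL hn ht
    refine ⟨hle, ?_, ?_⟩
    · intro hdomeq
      have hmem : n ∈ domSet n L := by
        have := Nat.sSup_mem hne hBdd
        rwa [← domatic3_eq, hdomeq] at this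
      obtain ⟨P, hdisj, huniv, hdomP⟩ := hmem
      have hsum := partition_sum P hdisj huniv
      have hge : ∀ i, n ≤ (P i).ncard := fun i => (dominating_card hL (hdomP i)).1
      have hcards : ∀ i, (P i).ncard = n := by
        by_contra hcon
        push_neg at hcon
        obtain ⟨i0, hi0⟩ := hcon
        have hlt : ∑ _i : Fin n, n < ∑ i, (P i).ncard :=
          Finset.sum_lt_sum (fun i _ => hge i)
            ⟨i0, Finset.mem_univ i0, lt_of_le_of_ne (hge i0) (Ne.symm hi0)⟩
        rw [hsum, Finset.sum_const, Finset.card_univ, Fintype.card_fin, smul_eq_mul] at hlt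
        omega
      refine ⟨P, hdisj, huniv, fun i => ?_⟩
      exact indep_transversal hL (hcards i)
        ((dominating_card hL (hdomP i)).2 (hcards i))
    · rintro ⟨T, hdisjT, hunivT, hT⟩
      have hmem : n ∈ domSet n L :=
        ⟨T, hdisjT, hunivT, fun i => transversal_dominating hL (hT i)⟩
      exact le_antisymm hle (by rw [domatic3_eq]; exact le_csSup hBdd hmem)
end

section
/- Every quasi-transversal of a Latin square L of order n ≥ 3 is a 3-dominating set of size n+1 in the Latin square graph L_3(L,n); conversely, every 3-dominating set of L_3(L,n) of size n+1 is a quasi-transversal of L. -/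
lemma fiber_sum {n : ℕ} (S : Set (Fin n × Fin n)) (f : Fin n × Fin n → Fin n) :
    S.ncard = ∑ k : Fin n, ({c ∈ S | f c = k}).ncard := by
  classical
  rw [Set.ncard_eq_toFinset_card' S,
    Finset.card_eq_sum_card_fiberwise (f := f) (t := Finset.univ) (fun x _ => Finset.mem_univ _)]
  refine Finset.sum_congr rfl fun k _ => ?_
  have h : {c ∈ S | f c = k} = ↑(S.toFinset.filter fun c => f c = k) := by
    ext c; simp
  rw [h, Set.ncard_coe_finset]

lemma exists_two {n : ℕ} (r : Fin n → ℕ) (hpos : ∀ i, 1 ≤ r i)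
    (hsum : ∑ i, r i = n + 1) : ∃ i0, r i0 = 2 ∧ ∀ i, i ≠ i0 → r i = 1 := by
  classical
  have hone : ∃ i0, 2 ≤ r i0 := by
    by_contra h
    push_neg at h
    have heq : ∀ i ∈ Finset.univ, r i = 1 := fun i _ => by
      have := hpos i; have := h i; omega
    rw [Finset.sum_congr rfl heq, Finset.sum_const, Finset.card_univ, Fintype.card_fin,
      smul_eq_mul, mul_one] at hsum
    omega
  obtain ⟨i0, h2⟩ := hone
  have hsplit : r i0 + ∑ i ∈ Finset.univ.erase i0, r i = n + 1 := by
    rw [Finset.add_sum_erase _ _ (Finset.mem_univ i0)]; exact hsum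
  have hub : (Finset.univ.erase i0).card ≤ ∑ i ∈ Finset.univ.erase i0, r i := by
    have := Finset.card_nsmul_le_sum (Finset.univ.erase i0) r 1 (fun i _ => hpos i)
    simpa using this
  have hcard' : (Finset.univ.erase i0).card = n - 1 := by
    simp [Finset.card_erase_of_mem]
  have hr2 : r i0 = 2 := by omega
  refine ⟨i0, hr2, ?_⟩
  intro i hi
  by_contra hne
  have h2i : 2 ≤ r i := by have := hpos i; omega
  have hmem : i ∈ Finset.univ.erase i0 := Finset.mem_erase.mpr ⟨hi, Finset.mem_univ i⟩
  have hsplit2 : r i + ∑ x ∈ (Finset.univ.erase i0).erase i, r x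
      = ∑ x ∈ Finset.univ.erase i0, r x := Finset.add_sum_erase _ _ hmem
  have hub2 : ((Finset.univ.erase i0).erase i).card ≤ ∑ x ∈ (Finset.univ.erase i0).erase i, r x := by
    have := Finset.card_nsmul_le_sum ((Finset.univ.erase i0).erase i) r 1
      (fun x _ => hpos x)
    simpa using this
  have hcard2 : ((Finset.univ.erase i0).erase i).card = n - 1 - 1 := by
    simp [Finset.card_erase_of_mem, hmem, hcard']
  omega

lemma latinGraph_adj {n : ℕ} (L : Fin n → Fin n → Fin n) (v c : Fin n × Fin n) :
    (latinGraph n L).Adj v c ↔ v ≠ c ∧ (c.1 = v.1 ∨ c.2 = v.2 ∨ L c.1 c.2 = L v.1 v.2) := by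
  simp only [latinGraph, SimpleGraph.fromRel_adj]
  constructor
  · rintro ⟨hne, (h|h|h)|(h|h|h)⟩ <;> exact ⟨hne, by tauto⟩
  · rintro ⟨hne, h|h|h⟩ <;> exact ⟨hne, Or.inr (by tauto)⟩


theorem stmt13 (n : ℕ) (hn : 3 ≤ n) (L : Fin n → Fin n → Fin n) (hL : IsLatin n L)
    (S : Set (Fin n × Fin n)) :
    (IsQuasiTransversal n L S →
      IsKDominating (latinGraph n L) 3 S ∧ S.ncard = n + 1) ∧
    ((IsKDominating (latinGraph n L) 3 S ∧ S.ncard = n + 1) →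
      IsQuasiTransversal n L S) := by
  classical
  constructor
  · rintro ⟨⟨i0, hi0, hi⟩, ⟨j0, hj0, hj⟩, ⟨s0, hs0, hs⟩⟩
    have hApos : ∀ i : Fin n, 1 ≤ ({c ∈ S | c.1 = i}).ncard := by
      intro i; rcases eq_or_ne i i0 with rfl | h
      · rw [hi0]; omega
      · exact (hi i h).ge
    have hBpos : ∀ j : Fin n, 1 ≤ ({c ∈ S | c.2 = j}).ncard := by
      intro j; rcases eq_or_ne j j0 with rfl | h
      · rw [hj0]; omega
      · exact (hj j h).ge
    have hCpos : ∀ s : Fin n, 1 ≤ ({c ∈ S | L c.1 c.2 = s}).ncard := by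
      intro s; rcases eq_or_ne s s0 with rfl | h
      · rw [hs0]; omega
      · exact (hs s h).ge
    have hcard : S.ncard = n + 1 := by
      rw [fiber_sum S (fun c => c.1),
        ← Finset.add_sum_erase _ _ (Finset.mem_univ i0)]
      have heq : ∀ i ∈ Finset.univ.erase i0,
          ({c ∈ S | c.1 = i}).ncard = 1 := fun i hi' => hi i (Finset.mem_erase.mp hi').1
      rw [Finset.sum_congr rfl heq, Finset.sum_const, hi0, smul_eq_mul, mul_one,
        Finset.card_erase_of_mem (Finset.mem_univ i0), Finset.card_univ, Fintype.card_fin]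
      omega
    refine ⟨?_, hcard⟩
    intro v hv
    have hsub : {c ∈ S | c.1 = v.1} ∪ {c ∈ S | c.2 = v.2} ∪ {c ∈ S | L c.1 c.2 = L v.1 v.2}
        ⊆ S ∩ (latinGraph n L).neighborSet v := by
      intro c hc
      have hcS : c ∈ S := by rcases hc with (h | h) | h <;> exact h.1
      have hvc : v ≠ c := fun h => hv (h ▸ hcS)
      refine ⟨hcS, ?_⟩
      rw [SimpleGraph.mem_neighborSet, latinGraph_adj]
      refine ⟨hvc, ?_⟩
      rcases hc with (h | h) | h
      · exact Or.inl h.2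
      · exact Or.inr (Or.inl h.2)
      · exact Or.inr (Or.inr h.2)
    have hAB : Disjoint {c ∈ S | c.1 = v.1} {c ∈ S | c.2 = v.2} := by
      rw [Set.disjoint_left]
      rintro c ⟨hcS, h1⟩ ⟨_, h2⟩
      exact hv (by rw [← Prod.ext_iff.mpr ⟨h1, h2⟩]; exact hcS)
    have hAC : Disjoint {c ∈ S | c.1 = v.1} {c ∈ S | L c.1 c.2 = L v.1 v.2} := by
      rw [Set.disjoint_left]
      rintro c ⟨hcS, h1⟩ ⟨_, h2⟩
      rw [h1] at h2
      have h3 : c.2 = v.2 := (hL.1 v.1).1 h2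
      exact hv (by rw [← Prod.ext_iff.mpr ⟨h1, h3⟩]; exact hcS)
    have hBC : Disjoint {c ∈ S | c.2 = v.2} {c ∈ S | L c.1 c.2 = L v.1 v.2} := by
      rw [Set.disjoint_left]
      rintro c ⟨hcS, h1⟩ ⟨_, h2⟩
      rw [h1] at h2
      have h3 : c.1 = v.1 := (hL.2 v.2).1 h2
      exact hv (by rw [← Prod.ext_iff.mpr ⟨h3, h1⟩]; exact hcS)
    have hABC : Disjoint ({c ∈ S | c.1 = v.1} ∪ {c ∈ S | c.2 = v.2})
        {c ∈ S | L c.1 c.2 = L v.1 v.2} := Set.disjoint_union_left.mpr ⟨hAC, hBC⟩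
    have hunion : ({c ∈ S | c.1 = v.1} ∪ {c ∈ S | c.2 = v.2} ∪ {c ∈ S | L c.1 c.2 = L v.1 v.2}).ncard
        = ({c ∈ S | c.1 = v.1}).ncard + ({c ∈ S | c.2 = v.2}).ncard
          + ({c ∈ S | L c.1 c.2 = L v.1 v.2}).ncard := by
      rw [Set.ncard_union_eq hABC (Set.toFinite _) (Set.toFinite _),
        Set.ncard_union_eq hAB (Set.toFinite _) (Set.toFinite _)]
    have h3 := Set.ncard_le_ncard hsub (Set.toFinite _)
    have := hApos v.1; have := hBpos v.2; have := hCpos (L v.1 v.2)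
    omega
  · rintro ⟨hdom, hcard⟩
    have hrowsum : ∑ i : Fin n, ({c ∈ S | c.1 = i}).ncard = n + 1 := by
      rw [← fiber_sum S (fun c => c.1), hcard]
    have hcolsum : ∑ j : Fin n, ({c ∈ S | c.2 = j}).ncard = n + 1 := by
      rw [← fiber_sum S (fun c => c.2), hcard]
    have hsymsum : ∑ k : Fin n, ({c ∈ S | L c.1 c.2 = k}).ncard = n + 1 := by
      rw [← fiber_sum S (fun c => L c.1 c.2), hcard]
    -- rows nonempty
    have hrow : ∀ i : Fin n, 1 ≤ ({c ∈ S | c.1 = i}).ncard := by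
      intro i
      by_contra h
      have hempty : {c ∈ S | c.1 = i} = ∅ :=
        (Set.ncard_eq_zero (Set.toFinite _)).mp (by omega)
      have hkey : ∀ j : Fin n,
          3 ≤ ({c ∈ S | c.2 = j}).ncard + ({c ∈ S | L c.1 c.2 = L i j}).ncard := by
        intro j
        have hvS : (i, j) ∉ S := fun hmem =>
          Set.eq_empty_iff_forall_notMem.mp hempty (i, j) ⟨hmem, rfl⟩
        have h3 := hdom (i, j) hvS
        have hsub : S ∩ (latinGraph n L).neighborSet (i, j)
            ⊆ {c ∈ S | c.2 = j} ∪ {c ∈ S | L c.1 c.2 = L i j} := by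
          rintro c ⟨hcS, hadj⟩
          rw [SimpleGraph.mem_neighborSet, latinGraph_adj] at hadj
          rcases hadj.2 with h1 | h1 | h1
          · exact absurd (Set.eq_empty_iff_forall_notMem.mp hempty c ⟨hcS, h1⟩) (fun h => h)
          · exact Or.inl ⟨hcS, h1⟩
          · exact Or.inr ⟨hcS, h1⟩
        calc 3 ≤ (S ∩ (latinGraph n L).neighborSet (i, j)).ncard := h3
          _ ≤ ({c ∈ S | c.2 = j} ∪ {c ∈ S | L c.1 c.2 = L i j}).ncard :=
            Set.ncard_le_ncard hsub (Set.toFinite _)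
          _ ≤ _ := Set.ncard_union_le _ _
      have hsum3 : ∑ j : Fin n, (3 : ℕ)
          ≤ ∑ j : Fin n, (({c ∈ S | c.2 = j}).ncard + ({c ∈ S | L c.1 c.2 = L i j}).ncard) :=
        Finset.sum_le_sum (fun j _ => hkey j)
      rw [Finset.sum_add_distrib, Finset.sum_const, Finset.card_univ, Fintype.card_fin,
        smul_eq_mul] at hsum3
      have hbij : ∑ j : Fin n, ({c ∈ S | L c.1 c.2 = L i j}).ncard
          = ∑ k : Fin n, ({c ∈ S | L c.1 c.2 = k}).ncard :=
        Fintype.sum_bijective (L i) (hL.1 i) _ _ (fun j => rfl)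
      omega
    -- columns nonempty
    have hcol : ∀ j : Fin n, 1 ≤ ({c ∈ S | c.2 = j}).ncard := by
      intro j
      by_contra h
      have hempty : {c ∈ S | c.2 = j} = ∅ :=
        (Set.ncard_eq_zero (Set.toFinite _)).mp (by omega)
      have hkey : ∀ i : Fin n,
          3 ≤ ({c ∈ S | c.1 = i}).ncard + ({c ∈ S | L c.1 c.2 = L i j}).ncard := by
        intro i
        have hvS : (i, j) ∉ S := fun hmem =>
          Set.eq_empty_iff_forall_notMem.mp hempty (i, j) ⟨hmem, rfl⟩
        have h3 := hdom (i, j) hvS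
        have hsub : S ∩ (latinGraph n L).neighborSet (i, j)
            ⊆ {c ∈ S | c.1 = i} ∪ {c ∈ S | L c.1 c.2 = L i j} := by
          rintro c ⟨hcS, hadj⟩
          rw [SimpleGraph.mem_neighborSet, latinGraph_adj] at hadj
          rcases hadj.2 with h1 | h1 | h1
          · exact Or.inl ⟨hcS, h1⟩
          · exact absurd (Set.eq_empty_iff_forall_notMem.mp hempty c ⟨hcS, h1⟩) (fun h => h)
          · exact Or.inr ⟨hcS, h1⟩
        calc 3 ≤ (S ∩ (latinGraph n L).neighborSet (i, j)).ncard := h3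
          _ ≤ ({c ∈ S | c.1 = i} ∪ {c ∈ S | L c.1 c.2 = L i j}).ncard :=
            Set.ncard_le_ncard hsub (Set.toFinite _)
          _ ≤ _ := Set.ncard_union_le _ _
      have hsum3 : ∑ i : Fin n, (3 : ℕ)
          ≤ ∑ i : Fin n, (({c ∈ S | c.1 = i}).ncard + ({c ∈ S | L c.1 c.2 = L i j}).ncard) :=
        Finset.sum_le_sum (fun i _ => hkey i)
      rw [Finset.sum_add_distrib, Finset.sum_const, Finset.card_univ, Fintype.card_fin,
        smul_eq_mul] at hsum3
      have hbij : ∑ i : Fin n, ({c ∈ S | L c.1 c.2 = L i j}).ncard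
          = ∑ k : Fin n, ({c ∈ S | L c.1 c.2 = k}).ncard :=
        Fintype.sum_bijective (fun i => L i j) (hL.2 j) _ _ (fun i => rfl)
      omega
    -- symbols nonempty
    have hsym : ∀ k : Fin n, 1 ≤ ({c ∈ S | L c.1 c.2 = k}).ncard := by
      intro k
      by_contra h
      have hempty : {c ∈ S | L c.1 c.2 = k} = ∅ :=
        (Set.ncard_eq_zero (Set.toFinite _)).mp (by omega)
      set e : Fin n → Fin n := fun i => (Equiv.ofBijective (L i) (hL.1 i)).symm k with he
      have hLe : ∀ i, L i (e i) = k := fun i =>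
        (Equiv.ofBijective (L i) (hL.1 i)).apply_symm_apply k
      have hebij : Function.Bijective e := by
        rw [Fintype.bijective_iff_injective_and_card]
        refine ⟨fun i1 i2 heq => ?_, rfl⟩
        have h1 : L i1 (e i2) = k := heq ▸ hLe i1
        have h2 : L i2 (e i2) = k := hLe i2
        exact (hL.2 (e i2)).1 (h1.trans h2.symm)
      have hkey : ∀ i : Fin n,
          3 ≤ ({c ∈ S | c.1 = i}).ncard + ({c ∈ S | c.2 = e i}).ncard := by
        intro i
        have hvS : (i, e i) ∉ S := fun hmem =>
          Set.eq_empty_iff_forall_notMem.mp hempty (i, e i) ⟨hmem, hLe i⟩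
        have h3 := hdom (i, e i) hvS
        have hsub : S ∩ (latinGraph n L).neighborSet (i, e i)
            ⊆ {c ∈ S | c.1 = i} ∪ {c ∈ S | c.2 = e i} := by
          rintro c ⟨hcS, hadj⟩
          rw [SimpleGraph.mem_neighborSet, latinGraph_adj] at hadj
          rcases hadj.2 with h1 | h1 | h1
          · exact Or.inl ⟨hcS, h1⟩
          · exact Or.inr ⟨hcS, h1⟩
          · have : L c.1 c.2 = k := by rw [h1]; exact hLe i
            exact absurd (Set.eq_empty_iff_forall_notMem.mp hempty c ⟨hcS, this⟩) (fun h => h)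
        calc 3 ≤ (S ∩ (latinGraph n L).neighborSet (i, e i)).ncard := h3
          _ ≤ ({c ∈ S | c.1 = i} ∪ {c ∈ S | c.2 = e i}).ncard :=
            Set.ncard_le_ncard hsub (Set.toFinite _)
          _ ≤ _ := Set.ncard_union_le _ _
      have hsum3 : ∑ i : Fin n, (3 : ℕ)
          ≤ ∑ i : Fin n, (({c ∈ S | c.1 = i}).ncard + ({c ∈ S | c.2 = e i}).ncard) :=
        Finset.sum_le_sum (fun i _ => hkey i)
      rw [Finset.sum_add_distrib, Finset.sum_const, Finset.card_univ, Fintype.card_fin,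
        smul_eq_mul] at hsum3
      have hbij : ∑ i : Fin n, ({c ∈ S | c.2 = e i}).ncard
          = ∑ j : Fin n, ({c ∈ S | c.2 = j}).ncard :=
        Fintype.sum_bijective e hebij _ _ (fun i => rfl)
      omega
    exact ⟨exists_two _ hrow hrowsum, exists_two _ hcol hcolsum, exists_two _ hsym hsymsum⟩
end

section
/- For the cyclic Latin square L of even order n (the Cayley table of Z_n, with ℓ_{ij} = i + j mod n), the set S = {(i,i) : 1 ≤ i ≤ n/2} ∪ {(i,i+1) : n/2+1 ≤ i ≤ n, indices mod n} ∪ {(n/2+1, n/2+1)} is a 3-dominating set of size n+1 in the Latin square graph L_3(L,n). -/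
theorem stmt15 (n : ℕ) (hn : Even n) (hpos : 0 < n) :
    IsKDominating (latinGraph n fun i j => i + j) 3
      {c : Fin n × Fin n |
        (c.1.val < n / 2 ∧ c.2 = c.1) ∨
        (n / 2 ≤ c.1.val ∧ c.2.val = (c.1.val + 1) % n) ∨
        (c.1.val = n / 2 ∧ c.2 = c.1)} ∧
    ({c : Fin n × Fin n |
        (c.1.val < n / 2 ∧ c.2 = c.1) ∨
        (n / 2 ≤ c.1.val ∧ c.2.val = (c.1.val + 1) % n) ∨
        (c.1.val = n / 2 ∧ c.2 = c.1)}).ncard = n + 1 := by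
  obtain ⟨h, hh⟩ := hn
  have hn2 : n = 2 * h := by omega
  have hpos' : 0 < h := by omega
  have hn1 : 2 ≤ n := by omega
  have hhn : n / 2 = h := by omega
  have hNZ : NeZero n := ⟨by omega⟩
  simp only [hhn]
  set F : Fin n → Fin n := fun i => if i.val < h then i else i + 1 with hF
  have hFval : ∀ i : Fin n, h ≤ i.val → (F i).val = (i.val + 1) % n := by
    intro i hi
    simp only [hF, if_neg (by omega : ¬ i.val < h)]
    rw [Fin.val_add, Fin.val_one', Nat.mod_eq_of_lt (show (1:ℕ) < n by omega)]
  have hFlt : ∀ i : Fin n, i.val < h → F i = i := by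
    intro i hi; simp only [hF, if_pos hi]
  set H : Fin n := ⟨h, by omega⟩ with hH
  have memS : ∀ c : Fin n × Fin n,
      ((c.1.val < h ∧ c.2 = c.1) ∨ (h ≤ c.1.val ∧ c.2.val = (c.1.val + 1) % n) ∨
       (c.1.val = h ∧ c.2 = c.1)) ↔ (c = (H, H) ∨ ∃ i, (i, F i) = c) := by
    intro c
    constructor
    · rintro (⟨hlt, he⟩ | ⟨hle, he⟩ | ⟨heq, he⟩)
      · exact Or.inr ⟨c.1, Prod.ext rfl (by rw [hFlt c.1 hlt, he])⟩
      · refine Or.inr ⟨c.1, Prod.ext rfl (Fin.ext ?_)⟩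
        rw [hFval c.1 hle, he]
      · refine Or.inl (Prod.ext (Fin.ext heq) ?_)
        show c.2 = H
        rw [he]; exact Fin.ext heq
    · rintro (rfl | ⟨i, rfl⟩)
      · exact Or.inr (Or.inr ⟨rfl, rfl⟩)
      · rcases Nat.lt_or_ge i.val h with hi | hi
        · exact Or.inl ⟨hi, hFlt i hi⟩
        · exact Or.inr (Or.inl ⟨hi, hFval i hi⟩)
  constructor
  · -- 3-domination
    intro v hv
    simp only [Set.mem_setOf_eq] at hv
    have hvS : ¬ (v = (H, H) ∨ ∃ i, (i, F i) = v) := fun hc => hv ((memS v).mpr hc)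
    have hmem : ∀ c : Fin n × Fin n, (c = (H, H) ∨ ∃ i, (i, F i) = c) →
        c ∈ {c : Fin n × Fin n |
          (c.1.val < h ∧ c.2 = c.1) ∨ (h ≤ c.1.val ∧ c.2.val = (c.1.val + 1) % n) ∨
          (c.1.val = h ∧ c.2 = c.1)} := fun c hc => (memS c).mpr hc
    have hFne : F v.1 ≠ v.2 := by
      intro e
      exact hvS (Or.inr ⟨v.1, Prod.ext rfl e⟩)
    -- row cell
    set a : Fin n × Fin n := (v.1, F v.1) with ha_def
    have haS : a = (H, H) ∨ ∃ i, (i, F i) = a := Or.inr ⟨v.1, rfl⟩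
    have hav : a ≠ v := by
      intro e; exact hvS (Or.inr ⟨v.1, e⟩)
    -- column cell
    obtain ⟨b, hbS, hb2⟩ : ∃ b : Fin n × Fin n,
        (b = (H, H) ∨ ∃ i, (i, F i) = b) ∧ b.2 = v.2 := by
      rcases Nat.lt_or_ge v.2.val h with hc | hc
      · exact ⟨(v.2, v.2), Or.inr ⟨v.2, Prod.ext rfl (hFlt v.2 hc)⟩, rfl⟩
      · rcases Nat.eq_or_lt_of_le hc with hc' | hc'
        · exact ⟨(v.2, v.2), Or.inl (Prod.ext (Fin.ext hc'.symm) (Fin.ext hc'.symm)), rfl⟩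
        · refine ⟨(⟨v.2.val - 1, by omega⟩, v.2), Or.inr ⟨⟨v.2.val - 1, by omega⟩,
            Prod.ext rfl (Fin.ext ?_)⟩, rfl⟩
          rw [hFval _ (show h ≤ v.2.val - 1 by omega)]
          show (v.2.val - 1 + 1) % n = v.2.val
          rw [(by omega : v.2.val - 1 + 1 = v.2.val), Nat.mod_eq_of_lt v.2.isLt]
    have hbv : b ≠ v := by
      intro e; exact hvS (e ▸ hbS)
    -- symbol cell
    obtain ⟨d, hdS, hd2⟩ : ∃ d : Fin n × Fin n,
        (d = (H, H) ∨ ∃ i, (i, F i) = d) ∧ d.1 + d.2 = v.1 + v.2 := by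
      set s : Fin n := v.1 + v.2 with hs
      rcases Nat.even_or_odd s.val with ⟨t, ht⟩ | ⟨t, ht⟩
      · -- s.val = t + t, t < h
        have htlt : t < h := by
          have := s.isLt; omega
        refine ⟨(⟨t, by omega⟩, ⟨t, by omega⟩),
          Or.inr ⟨⟨t, by omega⟩, Prod.ext rfl (hFlt _ htlt)⟩, Fin.ext ?_⟩
        rw [Fin.val_add]
        show (t + t) % n = s.val
        rw [← ht, Nat.mod_eq_of_lt s.isLt]
      · -- s.val = 2*t + 1, t < h
        have htlt : t < h := by
          have := s.isLt; omega
        refine ⟨(⟨t + h, by omega⟩, ⟨(t + h + 1) % n, Nat.mod_lt _ (by omega)⟩),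
          Or.inr ⟨⟨t + h, by omega⟩, Prod.ext rfl (Fin.ext ?_)⟩, Fin.ext ?_⟩
        · rw [hFval _ (show h ≤ t + h by omega)]
        · rw [Fin.val_add]
          show ((t + h) + (t + h + 1) % n) % n = s.val
          rcases Nat.lt_or_ge (t + h + 1) n with hlt | hge
          · rw [Nat.mod_eq_of_lt hlt]
            have : (t + h) + (t + h + 1) = (2 * t + 1) + n := by omega
            rw [this, Nat.add_mod_right, Nat.mod_eq_of_lt (by omega : 2 * t + 1 < n)]
            omega
          · have he1 : t + h + 1 = n := by omega
            rw [he1, Nat.mod_self, Nat.add_zero,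
              Nat.mod_eq_of_lt (by omega : t + h < n)]
            omega
    have hdv : d ≠ v := by
      intro e; exact hvS (e ▸ hdS)
    -- distinctness
    have hab : a ≠ b := by
      intro e
      exact hFne (by rw [show F v.1 = a.2 from rfl, e, hb2])
    have had : a ≠ d := by
      intro e
      apply hFne
      apply add_left_cancel (a := v.1)
      rw [← hd2, ← e]
    have hbd : b ≠ d := by
      intro e
      apply hbv
      subst e
      rw [hb2] at hd2
      exact Prod.ext (add_right_cancel hd2) hb2
    -- adjacency
    have hadj : ∀ w : Fin n × Fin n, w ≠ v →
        (w.1 = v.1 ∨ w.2 = v.2 ∨ w.1 + w.2 = v.1 + v.2) →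
        w ∈ (latinGraph n fun i j => i + j).neighborSet v := by
      intro w hw hrel
      show (latinGraph n fun i j => i + j).Adj v w
      rw [latinGraph, SimpleGraph.fromRel_adj]
      exact ⟨Ne.symm hw, Or.inr hrel⟩
    have hsub : ({a, b, d} : Set (Fin n × Fin n)) ⊆
        {c : Fin n × Fin n |
          (c.1.val < h ∧ c.2 = c.1) ∨ (h ≤ c.1.val ∧ c.2.val = (c.1.val + 1) % n) ∨
          (c.1.val = h ∧ c.2 = c.1)} ∩
        (latinGraph n fun i j => i + j).neighborSet v := by
      intro x hx
      simp only [Set.mem_insert_iff, Set.mem_singleton_iff] at hx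
      rcases hx with hxe | hxe | hxe
      · rw [hxe]; exact ⟨hmem a haS, hadj a hav (Or.inl rfl)⟩
      · rw [hxe]; exact ⟨hmem b hbS, hadj b hbv (Or.inr (Or.inl hb2))⟩
      · rw [hxe]; exact ⟨hmem d hdS, hadj d hdv (Or.inr (Or.inr hd2))⟩
    calc (3 : ℕ) = ({a, b, d} : Set (Fin n × Fin n)).ncard := by
          rw [Set.ncard_insert_of_notMem (by simp [hab, had]),
            Set.ncard_insert_of_notMem (by simp [hbd]), Set.ncard_singleton]
      _ ≤ _ := Set.ncard_le_ncard hsub (Set.toFinite _)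
  · -- cardinality
    have hset : {c : Fin n × Fin n |
        (c.1.val < h ∧ c.2 = c.1) ∨ (h ≤ c.1.val ∧ c.2.val = (c.1.val + 1) % n) ∨
        (c.1.val = h ∧ c.2 = c.1)} =
        insert (H, H) (Set.range fun i : Fin n => (i, F i)) := by
      ext c
      simp only [Set.mem_setOf_eq, Set.mem_insert_iff, Set.mem_range]
      exact memS c
    rw [hset]
    have hnotmem : (H, H) ∉ Set.range fun i : Fin n => (i, F i) := by
      rintro ⟨i, hi⟩
      have h1 : i = H := congrArg Prod.fst hi
      have h2 : F i = H := congrArg Prod.snd hi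
      rw [h1] at h2
      have h3 : (F H).val = (h + 1) % n := hFval H (le_refl h)
      rw [h2] at h3
      have h4 : h = (h + 1) % n := h3
      rcases Nat.lt_or_ge (h + 1) n with hlt | hge
      · rw [Nat.mod_eq_of_lt hlt] at h4
        omega
      · have he : h + 1 = n := by omega
        rw [he, Nat.mod_self] at h4
        omega
    rw [Set.ncard_insert_of_notMem hnotmem (Set.toFinite _)]
    have hinj : Function.Injective fun i : Fin n => (i, F i) :=
      fun x y hxy => congrArg Prod.fst hxy
    rw [← Set.image_univ, Set.ncard_image_of_injective _ hinj, Set.ncard_univ,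
      Nat.card_eq_fintype_card, Fintype.card_fin]
end

section
/- For even n, the cyclic Latin square of order n (Cayley table of Z_n) has a quasi-transversal but has no transversal; consequently γ_3(L_3(L,n)) = n + 1. -/
section Aux

/-! ### Auxiliary lemmas -/

lemma adj_iff' {n : ℕ} (v w : Fin n × Fin n) :
    (latinGraph n (fun i j => i + j)).Adj v w ↔
      v ≠ w ∧ (v.1 = w.1 ∨ v.2 = w.2 ∨ v.1 + v.2 = w.1 + w.2) := by
  simp only [latinGraph, SimpleGraph.fromRel_adj]
  constructor
  · rintro ⟨hne, h | h⟩
    · exact ⟨hne, h⟩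
    · refine ⟨hne, ?_⟩
      rcases h with h | h | h
      · exact Or.inl h.symm
      · exact Or.inr (Or.inl h.symm)
      · exact Or.inr (Or.inr h.symm)
  · rintro ⟨hne, h⟩
    exact ⟨hne, Or.inl h⟩

lemma notrans (n : ℕ) [NeZero n] (hn : Even n) :
    ¬ ∃ T : Set (Fin n × Fin n), IsTransversal n (fun i j => i + j) T := by
  rintro ⟨T, h1, h2, h3⟩
  choose f hf huniq using h1
  set g : Fin n → Fin n := fun i => (f i).2 with hg
  have hfi : ∀ i, f i = (i, g i) := by
    intro i
    have := (hf i).2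
    exact Prod.ext this rfl
  have hginj : Function.Injective g := by
    intro a b hab
    obtain ⟨c, -, hcu⟩ := h2 (g a)
    have ha := hcu (f a) ⟨(hf a).1, rfl⟩
    have hb := hcu (f b) ⟨(hf b).1, by rw [hg]; exact hab.symm⟩
    have : f a = f b := ha.trans hb.symm
    have := congrArg Prod.fst this
    rwa [(hf a).2, (hf b).2] at this
  have hbinj : Function.Injective (fun i => i + g i) := by
    intro a b hab
    obtain ⟨c, -, hcu⟩ := h3 (a + g a)
    have ha := hcu (f a) ⟨(hf a).1, by rw [hfi a]⟩
    have hb := hcu (f b) ⟨(hf b).1, by rw [hfi b]; exact hab.symm⟩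
    have : f a = f b := ha.trans hb.symm
    have := congrArg Prod.fst this
    rwa [(hf a).2, (hf b).2] at this
  have hgbij := hginj.bijective_of_finite
  have hbbij := hbinj.bijective_of_finite
  set A : ℕ := ∑ i : Fin n, (i : ℕ) with hA
  have e1 : ∑ i : Fin n, ((i + g i : Fin n) : ℕ) = A :=
    hbbij.sum_comp (fun x => (x : ℕ))
  have e2 : ∑ i : Fin n, ((g i : Fin n) : ℕ) = A :=
    hgbij.sum_comp (fun x => (x : ℕ))
  have e3 : (∑ i : Fin n, ((i + g i : Fin n) : ℕ)) % n
      = (∑ i : Fin n, ((i : ℕ) + (g i : ℕ))) % n := by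
    calc (∑ i : Fin n, ((i + g i : Fin n) : ℕ)) % n
        = (∑ i : Fin n, ((i + g i : Fin n) : ℕ) % n) % n := Finset.sum_nat_mod _ _ _
      _ = (∑ i : Fin n, ((i : ℕ) + (g i : ℕ)) % n) % n := by
          congr 1
          exact Finset.sum_congr rfl fun i _ => by rw [Fin.val_add, Nat.mod_mod]
      _ = (∑ i : Fin n, ((i : ℕ) + (g i : ℕ))) % n := (Finset.sum_nat_mod _ _ _).symm
  have e4 : ∑ i : Fin n, ((i : ℕ) + (g i : ℕ)) = A + A := by
    rw [Finset.sum_add_distrib, e2]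
  have hdvd : n ∣ A := by
    have h : (0 + A) % n = (A + A) % n := by rw [← e4, ← e3, e1, Nat.zero_add]
    have := Nat.ModEq.add_right_cancel' A h
    exact (Nat.modEq_zero_iff_dvd.mp this.symm)
  have hAval : A * 2 = n * (n - 1) := by
    rw [hA, Fin.sum_univ_eq_sum_range (fun i => i)]
    exact Finset.sum_range_id_mul_two n
  obtain ⟨q, hq⟩ := hdvd
  obtain ⟨m, hm⟩ := hn
  have hn0 : n ≠ 0 := NeZero.ne n
  have hq2 : n * (q * 2) = n * (n - 1) := by rw [← hAval, hq]; ring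
  have := Nat.eq_of_mul_eq_mul_left (Nat.pos_of_ne_zero hn0) hq2
  omega

lemma line_count {n : ℕ} (s : Fin n × Fin n) :
    (Finset.univ.filter (fun v : Fin n × Fin n =>
      v ≠ s ∧ (v.1 = s.1 ∨ v.2 = s.2 ∨ v.1 + v.2 = s.1 + s.2))).card = 3 * (n - 1) := by
  classical
  rcases Nat.eq_zero_or_pos n with rfl | hpos
  · simp [Finset.filter_eq_empty_iff]
  haveI : NeZero n := ⟨hpos.ne'⟩
  set A : Finset (Fin n × Fin n) := (Finset.univ.erase s.2).image fun j => (s.1, j) with hA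
  set B : Finset (Fin n × Fin n) := (Finset.univ.erase s.1).image fun i => (i, s.2) with hB
  set C : Finset (Fin n × Fin n) := (Finset.univ.erase s.1).image fun i => (i, s.1 + s.2 - i) with hC
  have hmemA : ∀ v, v ∈ A ↔ v.1 = s.1 ∧ v.2 ≠ s.2 := by
    intro v
    simp only [hA, Finset.mem_image, Finset.mem_erase, Finset.mem_univ, and_true]
    constructor
    · rintro ⟨j, hj, rfl⟩; exact ⟨rfl, hj⟩
    · rintro ⟨h1, h2⟩; exact ⟨v.2, h2, by rw [← h1]⟩
  have hmemB : ∀ v, v ∈ B ↔ v.2 = s.2 ∧ v.1 ≠ s.1 := by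
    intro v
    simp only [hB, Finset.mem_image, Finset.mem_erase, Finset.mem_univ, and_true]
    constructor
    · rintro ⟨i, hi, rfl⟩; exact ⟨rfl, hi⟩
    · rintro ⟨h1, h2⟩; exact ⟨v.1, h2, by rw [← h1]⟩
  have hmemC : ∀ v, v ∈ C ↔ v.1 + v.2 = s.1 + s.2 ∧ v.1 ≠ s.1 := by
    intro v
    simp only [hC, Finset.mem_image, Finset.mem_erase, Finset.mem_univ, and_true]
    constructor
    · rintro ⟨i, hi, rfl⟩
      exact ⟨by simp only []; abel_nf, hi⟩
    · rintro ⟨h1, h2⟩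
      refine ⟨v.1, h2, ?_⟩
      have : s.1 + s.2 - v.1 = v.2 := by rw [← h1]; exact add_sub_cancel_left v.1 v.2
      rw [this]
  have hsplit : Finset.univ.filter (fun v : Fin n × Fin n =>
      v ≠ s ∧ (v.1 = s.1 ∨ v.2 = s.2 ∨ v.1 + v.2 = s.1 + s.2)) = (A ∪ B) ∪ C := by
    ext v
    simp only [Finset.mem_filter, Finset.mem_univ, true_and, Finset.mem_union,
      hmemA, hmemB, hmemC]
    constructor
    · rintro ⟨hne, h | h | h⟩
      · refine Or.inl (Or.inl ⟨h, fun h2 => hne ?_⟩)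
        exact Prod.ext h h2
      · by_cases h1 : v.1 = s.1
        · exact absurd (Prod.ext h1 h) hne
        · exact Or.inl (Or.inr ⟨h, h1⟩)
      · by_cases h1 : v.1 = s.1
        · refine Or.inl (Or.inl ⟨h1, fun h2 => hne (Prod.ext h1 h2)⟩)
        · exact Or.inr ⟨h, h1⟩
    · rintro ((⟨h1, h2⟩ | ⟨h1, h2⟩) | ⟨h1, h2⟩)
      · exact ⟨fun he => h2 (congrArg Prod.snd he), Or.inl h1⟩
      · exact ⟨fun he => h2 (congrArg Prod.fst he), Or.inr (Or.inl h1)⟩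
      · exact ⟨fun he => h2 (congrArg Prod.fst he), Or.inr (Or.inr h1)⟩
  have hAB : Disjoint A B := by
    rw [Finset.disjoint_left]
    intro v hv hv2
    exact ((hmemB v).1 hv2).2 ((hmemA v).1 hv).1
  have hABC : Disjoint (A ∪ B) C := by
    rw [Finset.disjoint_left]
    intro v hv hv2
    rcases Finset.mem_union.1 hv with h | h
    · exact ((hmemC v).1 hv2).2 ((hmemA v).1 h).1
    · have hb := (hmemB v).1 h
      have hc := (hmemC v).1 hv2
      exact hc.2 (by have := hc.1; rw [hb.1] at this; exact add_right_cancel this)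
  have cA : A.card = n - 1 := by
    rw [hA, Finset.card_image_of_injective _ (fun a b h => (Prod.ext_iff.1 h).2),
      Finset.card_erase_of_mem (Finset.mem_univ _), Finset.card_univ, Fintype.card_fin]
  have cB : B.card = n - 1 := by
    rw [hB, Finset.card_image_of_injective _ (fun a b h => (Prod.ext_iff.1 h).1),
      Finset.card_erase_of_mem (Finset.mem_univ _), Finset.card_univ, Fintype.card_fin]
  have cC : C.card = n - 1 := by
    rw [hC, Finset.card_image_of_injective _ (fun a b h => (Prod.ext_iff.1 h).1),
      Finset.card_erase_of_mem (Finset.mem_univ _), Finset.card_univ, Fintype.card_fin]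
  rw [hsplit, Finset.card_union_of_disjoint hABC, Finset.card_union_of_disjoint hAB,
    cA, cB, cC]
  ring

lemma lower_bound {n : ℕ} [NeZero n] (hn : Even n) (S : Set (Fin n × Fin n))
    (hdom : IsKDominating (latinGraph n (fun i j => i + j)) 3 S) :
    n + 1 ≤ S.ncard := by
  classical
  set Rrel : (Fin n × Fin n) → (Fin n × Fin n) → Prop := fun v w =>
    v ≠ w ∧ (v.1 = w.1 ∨ v.2 = w.2 ∨ v.1 + v.2 = w.1 + w.2) with hR
  by_contra hle
  push_neg at hle
  have hnotrans := notrans n hn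
  have hSfin : S.Finite := Set.toFinite S
  set F : Finset (Fin n × Fin n) := hSfin.toFinset with hF
  have hmemF : ∀ v, v ∈ F ↔ v ∈ S := fun v => hSfin.mem_toFinset
  have hcardF : S.ncard = F.card := (Set.ncard_eq_toFinset_card S hSfin)
  set m := F.card with hm
  have hmle : m ≤ n := by omega
  have hcnt : ∀ v ∈ Finset.univ \ F, 3 ≤ (F.filter (fun w => Rrel v w)).card := by
    intro v hv
    rw [Finset.mem_sdiff] at hv
    have hvS : v ∉ S := fun h => hv.2 ((hmemF v).2 h)
    have := hdom v hvS
    have heq : S ∩ (latinGraph n (fun i j => i + j)).neighborSet v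
        = ↑(F.filter (fun w => Rrel v w)) := by
      ext w
      simp only [Set.mem_inter_iff, SimpleGraph.mem_neighborSet, Finset.coe_filter,
        Set.mem_setOf_eq, hmemF, adj_iff', hR]
      try tauto
    rwa [heq, Set.ncard_coe_finset] at this
  have hdouble : ∑ v ∈ Finset.univ \ F, (F.filter (fun w => Rrel v w)).card
      = ∑ s ∈ F, ((Finset.univ \ F).filter (fun v => Rrel v s)).card := by
    simp only [Finset.card_filter]
    exact Finset.sum_comm
  have hpart : ∀ s ∈ F, ((Finset.univ \ F).filter (fun v => Rrel v s)).card
      + (F.filter (fun v => Rrel v s)).card = 3 * (n - 1) := by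
    intro s _
    have hsp : Finset.univ.filter (fun v => Rrel v s)
        = ((Finset.univ \ F).filter (fun v => Rrel v s)) ∪ (F.filter (fun v => Rrel v s)) := by
      rw [← Finset.filter_union, Finset.sdiff_union_of_subset (Finset.subset_univ F)]
    rw [← line_count s, hsp, Finset.card_union_of_disjoint
      (Finset.disjoint_filter_filter Finset.sdiff_disjoint)]
  set E := ∑ s ∈ F, (F.filter (fun v => Rrel v s)).card with hE
  have hsum1 : (∑ s ∈ F, ((Finset.univ \ F).filter (fun v => Rrel v s)).card) + E
      = m * (3 * (n - 1)) := by
    rw [hE, ← Finset.sum_add_distrib]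
    rw [Finset.sum_congr rfl hpart, Finset.sum_const, smul_eq_mul]
  have hsum2 : 3 * (Finset.univ \ F).card
      ≤ ∑ v ∈ Finset.univ \ F, (F.filter (fun w => Rrel v w)).card := by
    calc 3 * (Finset.univ \ F).card = ∑ _v ∈ Finset.univ \ F, 3 := by
          rw [Finset.sum_const, smul_eq_mul, mul_comm]
      _ ≤ _ := Finset.sum_le_sum hcnt
  have hcard_sdiff : (Finset.univ \ F).card + m = n * n := by
    rw [Finset.card_sdiff_of_subset (Finset.subset_univ F), Finset.card_univ, Fintype.card_prod,
      Fintype.card_fin]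
    have := Finset.card_le_univ F
    rw [Fintype.card_prod, Fintype.card_fin] at this
    omega
  obtain ⟨p, hp⟩ : ∃ p, n = p + 1 := ⟨n - 1, by have := NeZero.ne n; omega⟩
  have harith : E = 0 ∧ m = n := by
    have h1 := hsum2.trans (le_of_eq hdouble)
    have key : 3 * (Finset.univ \ F).card + E ≤ m * (3 * (n - 1)) := by omega
    subst hp
    simp only [Nat.add_sub_cancel] at key
    constructor
    · nlinarith [key, hcard_sdiff, hmle]
    · nlinarith [key, hcard_sdiff, hmle]
  have hindep : ∀ v ∈ F, ∀ w ∈ F, ¬ Rrel v w := by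
    intro v hv w hw hRvw
    have h0 : (F.filter (fun x => Rrel x w)).card = 0 :=
      Finset.sum_eq_zero_iff.1 harith.1 w hw
    rw [Finset.card_eq_zero] at h0
    have : v ∈ F.filter (fun x => Rrel x w) := Finset.mem_filter.2 ⟨hv, hRvw⟩
    rw [h0] at this
    simp at this
  have hex : ∀ (φ : Fin n × Fin n → Fin n),
      (∀ v ∈ F, ∀ w ∈ F, v ≠ w → φ v ≠ φ w) → ∀ x, ∃! c, c ∈ S ∧ φ c = x := by
    intro φ hinj x
    have hinjOn : Set.InjOn φ F := by
      intro a ha b hb hab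
      by_contra hne
      exact hinj a ha b hb hne hab
    have himg : (F.image φ).card = n := by
      rw [Finset.card_image_of_injOn hinjOn, ← hm, harith.2]
    have huniv : F.image φ = Finset.univ :=
      Finset.eq_univ_of_card _ (by rw [himg, Fintype.card_fin])
    have hxmem : x ∈ F.image φ := huniv ▸ Finset.mem_univ x
    obtain ⟨c, hc, hcx⟩ := Finset.mem_image.1 hxmem
    refine ⟨c, ⟨(hmemF c).1 hc, hcx⟩, ?_⟩
    rintro y ⟨hyS, hyx⟩
    exact hinjOn ((hmemF y).2 hyS) hc (by rw [hyx, hcx])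
  apply hnotrans
  refine ⟨S, hex Prod.fst ?_, hex Prod.snd ?_, hex (fun c => c.1 + c.2) ?_⟩
  · intro v hv w hw hne heq
    exact hindep v hv w hw ⟨hne, Or.inl heq⟩
  · intro v hv w hw hne heq
    exact hindep v hv w hw ⟨hne, Or.inr (Or.inl heq)⟩
  · intro v hv w hw hne heq
    exact hindep v hv w hw ⟨hne, Or.inr (Or.inr heq)⟩

lemma class_counts {α : Type*} [DecidableEq α] (n : ℕ) (S : Finset α) (φ : α → Fin n)
    (hcard : S.card = n + 1) (hsurj : ∀ x, ∃ c ∈ S, φ c = x) :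
    ∃ x0, (S.filter fun c => φ c = x0).card = 2 ∧
      ∀ x, x ≠ x0 → (S.filter fun c => φ c = x).card = 1 := by
  classical
  set a : Fin n → ℕ := fun x => (S.filter fun c => φ c = x).card with ha
  have hsum : ∑ x, a x = n + 1 := by
    rw [← hcard]
    exact (Finset.card_eq_sum_card_fiberwise (fun c _ => Finset.mem_univ (φ c))).symm
  have hge : ∀ x, 1 ≤ a x := by
    intro x
    obtain ⟨c, hc, hcx⟩ := hsurj x
    exact Finset.card_pos.2 ⟨c, Finset.mem_filter.2 ⟨hc, hcx⟩⟩
  have hn : (Finset.univ : Finset (Fin n)).card = n := by simp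
  obtain ⟨x0, hx0⟩ : ∃ x0, 2 ≤ a x0 := by
    by_contra h
    push_neg at h
    have : ∑ x, a x ≤ ∑ _x : Fin n, 1 := Finset.sum_le_sum (fun x _ => by
      have := h x; omega)
    simp [hn] at this
    omega
  have herase : (∑ x ∈ Finset.univ.erase x0, a x) + a x0 = n + 1 := by
    rw [Finset.sum_erase_add _ _ (Finset.mem_univ x0)]
    exact hsum
  have hone : ∀ x, x ≠ x0 → a x = 1 := by
    intro x hx
    by_contra hx1
    have h2 : 2 ≤ a x := by have := hge x; omega
    have hxm : x ∈ Finset.univ.erase x0 := Finset.mem_erase.2 ⟨hx, Finset.mem_univ x⟩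
    have : (∑ y ∈ (Finset.univ.erase x0).erase x, a y) + a x
        = ∑ y ∈ Finset.univ.erase x0, a y :=
      Finset.sum_erase_add _ _ hxm
    have hlow : ∑ y ∈ (Finset.univ.erase x0).erase x, 1
        ≤ ∑ y ∈ (Finset.univ.erase x0).erase x, a y :=
      Finset.sum_le_sum (fun y _ => hge y)
    rw [Finset.sum_const, smul_eq_mul, mul_one] at hlow
    have hc2 : ((Finset.univ.erase x0).erase x).card = n - 2 := by
      rw [Finset.card_erase_of_mem hxm, Finset.card_erase_of_mem (Finset.mem_univ x0), hn]
      omega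
    omega
  refine ⟨x0, ?_, hone⟩
  have : ∑ x ∈ Finset.univ.erase x0, a x = ∑ x ∈ Finset.univ.erase x0, 1 :=
    Finset.sum_congr rfl (fun x hx => hone x (Finset.mem_erase.1 hx).1)
  rw [this, Finset.sum_const, smul_eq_mul, mul_one,
    Finset.card_erase_of_mem (Finset.mem_univ x0), hn] at herase
  show a x0 = 2
  omega

lemma ncard_sep {α : Type*} (F : Finset α) (p : α → Prop) [DecidablePred p] :
    {c ∈ (↑F : Set α) | p c}.ncard = (F.filter p).card := by
  rw [← Set.ncard_coe_finset (F.filter p)]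
  congr 1
  ext c
  simp

def sig (n : ℕ) (i : Fin n) : Fin n :=
  if i.val < n / 2 then i
  else if h : i.val = n - 1 then ⟨n / 2, by have := i.isLt; omega⟩
  else ⟨i.val + 1, by have := i.isLt; omega⟩

lemma sig_lt (n : ℕ) (i : Fin n) (h : i.val < n / 2) : sig n i = i := by
  simp [sig, h]

lemma sig_last (n : ℕ) (hn : 2 ≤ n) (i : Fin n) (h : i.val = n - 1) :
    (sig n i).val = n / 2 := by
  simp only [sig]
  rw [if_neg (by omega), dif_pos h]

lemma sig_mid (n : ℕ) (i : Fin n) (h1 : ¬ i.val < n / 2) (h2 : i.val ≠ n - 1) :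
    (sig n i).val = i.val + 1 := by
  simp only [sig]
  rw [if_neg h1, dif_neg h2]

lemma sig_surj (n : ℕ) (hn : 2 ≤ n) (j : Fin n) : ∃ i, sig n i = j := by
  rcases lt_trichotomy j.val (n / 2) with h | h | h
  · exact ⟨j, sig_lt n j h⟩
  · exact ⟨⟨n - 1, by omega⟩, Fin.ext <| by rw [sig_last n hn _ rfl, h]⟩
  · have hj := j.isLt
    refine ⟨⟨j.val - 1, by omega⟩, Fin.ext ?_⟩
    rw [sig_mid n _ (by simp; omega) (by simp; omega)]
    simp; omega

lemma sig_symbol_surj (n : ℕ) (hn2 : 2 ≤ n) (hn : Even n) (s : Fin n)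
    (hs : s.val ≠ n - 1) : ∃ i : Fin n, i + sig n i = s := by
  obtain ⟨m, hm⟩ := hn
  have hsl := s.isLt
  rcases Nat.even_or_odd s.val with he | ho
  · obtain ⟨a, ha⟩ := he
    refine ⟨⟨s.val / 2, by omega⟩, ?_⟩
    rw [sig_lt n _ (by simp; omega)]
    apply Fin.ext
    rw [Fin.val_add]
    simp only
    rw [Nat.mod_eq_of_lt (by omega)]
    omega
  · obtain ⟨a, ha⟩ := ho
    refine ⟨⟨(s.val + n - 1) / 2, by omega⟩, Fin.ext ?_⟩
    rw [Fin.val_add]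
    rw [sig_mid n _ (by simp; omega) (by simp; omega)]
    simp only
    have h3 : ((s.val + n - 1) / 2 : ℕ) + ((s.val + n - 1) / 2 + 1) = s.val + n := by omega
    rw [h3, Nat.add_mod_right, Nat.mod_eq_of_lt hsl]

lemma dom_of_classes {n : ℕ} [NeZero n] (S : Set (Fin n × Fin n))
    (hrow : ∀ i, ∃ c ∈ S, c.1 = i) (hcol : ∀ j, ∃ c ∈ S, c.2 = j)
    (hsym : ∀ s, ∃ c ∈ S, c.1 + c.2 = s) :
    IsKDominating (latinGraph n (fun i j => i + j)) 3 S := by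
  intro v hv
  obtain ⟨a, haS, hha⟩ := hrow v.1
  obtain ⟨b, hbS, hb⟩ := hcol v.2
  obtain ⟨c, hcS, hc⟩ := hsym (v.1 + v.2)
  have hav : v ≠ a := fun h => hv (h ▸ haS)
  have hbv : v ≠ b := fun h => hv (h ▸ hbS)
  have hcv : v ≠ c := fun h => hv (h ▸ hcS)
  have hab : a ≠ b := by
    rintro rfl
    exact hav (Prod.ext hha.symm hb.symm)
  have hac : a ≠ c := by
    rintro rfl
    rw [hha] at hc
    exact hav (Prod.ext hha.symm (add_left_cancel hc).symm)
  have hbc : b ≠ c := by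
    rintro rfl
    rw [hb] at hc
    exact hbv (Prod.ext (add_right_cancel hc).symm hb.symm)
  have hsub : ({a, b, c} : Set (Fin n × Fin n))
      ⊆ S ∩ (latinGraph n (fun i j => i + j)).neighborSet v := by
    intro x hx
    rcases hx with rfl | rfl | rfl
    · exact ⟨haS, (adj_iff' v x).2 ⟨hav, Or.inl hha.symm⟩⟩
    · exact ⟨hbS, (adj_iff' v x).2 ⟨hbv, Or.inr (Or.inl hb.symm)⟩⟩
    · exact ⟨hcS, (adj_iff' v x).2 ⟨hcv, Or.inr (Or.inr hc.symm)⟩⟩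
  have h3 : ({a, b, c} : Set (Fin n × Fin n)).ncard = 3 := by
    rw [Set.ncard_insert_of_notMem (by simp [hab, hac]),
      Set.ncard_insert_of_notMem (by simp [hbc]), Set.ncard_singleton]
  calc (3 : ℕ) = ({a, b, c} : Set (Fin n × Fin n)).ncard := h3.symm
    _ ≤ _ := Set.ncard_le_ncard hsub (Set.toFinite _)

end Aux

theorem stmt16 (n : ℕ) (hn : Even n) (hpos : 0 < n) :
    (∃ S : Set (Fin n × Fin n), IsQuasiTransversal n (fun i j => i + j) S) ∧
    (¬ ∃ T : Set (Fin n × Fin n), IsTransversal n (fun i j => i + j) T) ∧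
    gamma3 n (fun i j => i + j) = n + 1 := by
  classical
  haveI : NeZero n := ⟨hpos.ne'⟩
  have hn2 : 2 ≤ n := by
    obtain ⟨m, hm⟩ := hn
    omega
  -- the quasi-transversal as a Finset
  set lastF : Fin n := ⟨n - 1, by omega⟩ with hlast
  set F : Finset (Fin n × Fin n) :=
    (Finset.univ.image fun i => (i, sig n i)) ∪ {((0 : Fin n), lastF)} with hFdef
  have hzero : ((0 : Fin n)).val = 0 := rfl
  have hsig0 : sig n 0 = 0 := sig_lt n 0 (by rw [hzero]; omega)
  have hnotmem : ((0 : Fin n), lastF) ∉ (Finset.univ.image fun i : Fin n => (i, sig n i)) := by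
    intro h
    obtain ⟨i, -, heq⟩ := Finset.mem_image.1 h
    have h1 : i = 0 := congrArg Prod.fst heq
    have h2 : sig n i = lastF := congrArg Prod.snd heq
    rw [h1, hsig0] at h2
    have : (0 : ℕ) = n - 1 := congrArg Fin.val h2
    omega
  have hcard : F.card = n + 1 := by
    rw [hFdef, Finset.card_union_of_disjoint (Finset.disjoint_singleton_right.2 hnotmem),
      Finset.card_image_of_injective _ (fun a b h => congrArg Prod.fst h),
      Finset.card_univ, Fintype.card_fin, Finset.card_singleton]
  have hmemdiag : ∀ i : Fin n, (i, sig n i) ∈ F := by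
    intro i
    rw [hFdef]
    exact Finset.mem_union_left _ (Finset.mem_image_of_mem _ (Finset.mem_univ i))
  have hmemextra : ((0 : Fin n), lastF) ∈ F := by
    rw [hFdef]
    exact Finset.mem_union_right _ (Finset.mem_singleton_self _)
  have hrow : ∀ i : Fin n, ∃ c ∈ F, c.1 = i := fun i => ⟨(i, sig n i), hmemdiag i, rfl⟩
  have hcol : ∀ j : Fin n, ∃ c ∈ F, c.2 = j := by
    intro j
    obtain ⟨i, hi⟩ := sig_surj n hn2 j
    exact ⟨(i, sig n i), hmemdiag i, hi⟩
  have hsym : ∀ s : Fin n, ∃ c ∈ F, c.1 + c.2 = s := by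
    intro s
    by_cases hs : s.val = n - 1
    · refine ⟨((0 : Fin n), lastF), hmemextra, ?_⟩
      rw [zero_add]
      exact Fin.ext (by rw [hlast]; exact hs.symm)
    · obtain ⟨i, hi⟩ := sig_symbol_surj n hn2 hn s hs
      exact ⟨(i, sig n i), hmemdiag i, hi⟩
  -- quasi-transversal property
  have hquasi : IsQuasiTransversal n (fun i j => i + j) ↑F := by
    refine ⟨?_, ?_, ?_⟩
    · obtain ⟨x0, h2, h1⟩ := class_counts n F Prod.fst hcard
        (fun x => hrow x)
      exact ⟨x0, by rw [ncard_sep]; exact h2,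
        fun x hx => by rw [ncard_sep]; exact h1 x hx⟩
    · obtain ⟨x0, h2, h1⟩ := class_counts n F Prod.snd hcard
        (fun x => hcol x)
      exact ⟨x0, by rw [ncard_sep]; exact h2,
        fun x hx => by rw [ncard_sep]; exact h1 x hx⟩
    · obtain ⟨x0, h2, h1⟩ := class_counts n F (fun c => c.1 + c.2) hcard
        (fun x => hsym x)
      exact ⟨x0, by rw [ncard_sep]; exact h2,
        fun x hx => by rw [ncard_sep]; exact h1 x hx⟩
  have hnot := notrans n hn
  have hdom : IsKDominating (latinGraph n (fun i j => i + j)) 3 ↑F :=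
    dom_of_classes (↑F : Set (Fin n × Fin n))
      (fun i => by obtain ⟨c, hc, h⟩ := hrow i; exact ⟨c, Finset.mem_coe.2 hc, h⟩)
      (fun j => by obtain ⟨c, hc, h⟩ := hcol j; exact ⟨c, Finset.mem_coe.2 hc, h⟩)
      (fun s => by obtain ⟨c, hc, h⟩ := hsym s; exact ⟨c, Finset.mem_coe.2 hc, h⟩)
  have hncard : (↑F : Set (Fin n × Fin n)).ncard = n + 1 := by
    rw [Set.ncard_coe_finset, hcard]
  have hmemess : n + 1 ∈ {m | ∃ S : Set (Fin n × Fin n),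
      IsKDominating (latinGraph n (fun i j => i + j)) 3 S ∧ S.ncard = m} :=
    ⟨↑F, hdom, hncard⟩
  refine ⟨⟨↑F, hquasi⟩, hnot, le_antisymm (Nat.sInf_le hmemess) (le_csInf ⟨_, hmemess⟩ ?_)⟩
  rintro m ⟨S, hd, rfl⟩
  exact lower_bound hn S hd
end

section
/- For the cyclic group G of even order n, the 3-domatic number of the Latin square graph L_3(L_G, n) equals ⌊n²/(n+1)⌋ = n − 1. -/
namespace Stmt17


noncomputable def colr (n : ℕ) (c : Fin n × Fin n) : ZMod (n-1) :=
  if c.2.val = 0 then 2 * (c.1.val : ZMod (n-1)) + 1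
  else (c.1.val : ZMod (n-1)) + 2 * (c.2.val : ZMod (n-1))

lemma colr_pos {n : ℕ} (i j : Fin n) (h : j.val ≠ 0) :
    colr n (i, j) = (i.val : ZMod (n-1)) + 2 * (j.val : ZMod (n-1)) := by
  simp only [colr]; rw [if_neg h]

lemma colr_zero {n : ℕ} (i j : Fin n) (h : j.val = 0) :
    colr n (i, j) = 2 * (i.val : ZMod (n-1)) + 1 := by
  simp only [colr]; rw [if_pos h]

lemma cast_n {n : ℕ} (h2n : 2 ≤ n) : ((n : ℕ) : ZMod (n-1)) = 1 := by
  have h : n = (n-1) + 1 := by omega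
  rw [h]; push_cast [ZMod.natCast_self]; ring

lemma two_mul_inv2 {n : ℕ} (hn : Even n) (h2n : 2 ≤ n) :
    (2 : ZMod (n-1)) * ((n/2 : ℕ) : ZMod (n-1)) = 1 := by
  have h : (2 : ZMod (n-1)) * ((n/2 : ℕ) : ZMod (n-1)) = ((2 * (n/2) : ℕ) : ZMod (n-1)) := by
    push_cast; ring
  rw [h]
  have h2 : 2 * (n/2) = n := by obtain ⟨a, ha⟩ := hn; omega
  rw [h2, cast_n h2n]

lemma row_surj {n : ℕ} (hn : Even n) (h2n : 2 ≤ n) (i : Fin n) (k : ZMod (n-1)) :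
    ∃ j : Fin n, colr n (i, j) = k := by
  haveI : NeZero (n-1) := ⟨by omega⟩
  set x : ZMod (n-1) := (k - (i.val : ZMod (n-1))) * ((n/2 : ℕ) : ZMod (n-1)) with hx
  have h1 : (2 : ZMod (n-1)) * x = k - (i.val : ZMod (n-1)) := by
    rw [hx, mul_comm (k - _) _, ← mul_assoc, two_mul_inv2 hn h2n, one_mul]
  by_cases h0 : x.val = 0
  · set j : Fin n := ⟨n-1, by omega⟩ with hj
    have hjv : j.val = n - 1 := rfl
    refine ⟨j, ?_⟩
    rw [colr_pos _ _ (by omega)]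
    have hxz : x = 0 := by
      have := ZMod.natCast_rightInverse (n := n-1) x
      rw [h0] at this; simpa using this.symm
    have hcast : ((j.val : ℕ) : ZMod (n-1)) = 0 := by
      rw [hjv]; simpa using ZMod.natCast_self (n-1)
    rw [hxz, mul_zero] at h1
    rw [hcast]
    linear_combination h1
  · set j : Fin n := ⟨x.val, by have := ZMod.val_lt x; omega⟩ with hj
    have hjv : j.val = x.val := rfl
    refine ⟨j, ?_⟩
    rw [colr_pos _ _ (by omega)]
    rw [hjv, ZMod.natCast_rightInverse x]
    linear_combination h1

lemma col_surj {n : ℕ} (hn : Even n) (h2n : 2 ≤ n) (j : Fin n) (k : ZMod (n-1)) :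
    ∃ i : Fin n, colr n (i, j) = k := by
  haveI : NeZero (n-1) := ⟨by omega⟩
  by_cases h0 : j.val = 0
  · set x : ZMod (n-1) := (k - 1) * ((n/2 : ℕ) : ZMod (n-1)) with hx
    set i : Fin n := ⟨x.val, by have := ZMod.val_lt x; omega⟩ with hi
    have hiv : i.val = x.val := rfl
    refine ⟨i, ?_⟩
    rw [colr_zero _ _ h0, hiv, ZMod.natCast_rightInverse x]
    have h1 : (2 : ZMod (n-1)) * x = k - 1 := by
      rw [hx, mul_comm (k - 1) _, ← mul_assoc, two_mul_inv2 hn h2n, one_mul]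
    linear_combination h1
  · set x : ZMod (n-1) := k - 2 * (j.val : ZMod (n-1)) with hx
    set i : Fin n := ⟨x.val, by have := ZMod.val_lt x; omega⟩ with hi
    have hiv : i.val = x.val := rfl
    refine ⟨i, ?_⟩
    rw [colr_pos _ _ h0, hiv, ZMod.natCast_rightInverse x, hx]
    ring

lemma fin_sub_val_le {n : ℕ} (s j : Fin n) (h : j.val ≤ s.val) : (s - j).val = s.val - j.val := by
  rw [Fin.sub_def]
  have h1 : s.val < n := s.isLt
  have h2 : j.val < n := j.isLt
  show (n - j.val + s.val) % n = s.val - j.val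
  have he : n - j.val + s.val = (s.val - j.val) + n := by omega
  rw [he, Nat.add_mod_right, Nat.mod_eq_of_lt (by omega)]

lemma fin_sub_val_gt {n : ℕ} (s j : Fin n) (h : s.val < j.val) : (s - j).val = s.val + n - j.val := by
  rw [Fin.sub_def]
  have h1 : s.val < n := s.isLt
  have h2 : j.val < n := j.isLt
  show (n - j.val + s.val) % n = s.val + n - j.val
  rw [Nat.mod_eq_of_lt (by omega)]
  omega

lemma sym_surj {n : ℕ} (hn : Even n) (h2n : 2 ≤ n) (s : Fin n) (k : ZMod (n-1)) :
    ∃ c : Fin n × Fin n, c.1 + c.2 = s ∧ colr n c = k := by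
  haveI : NeZero (n-1) := ⟨by omega⟩
  haveI : NeZero n := ⟨by omega⟩
  by_cases hk : k = 2 * (s.val : ZMod (n-1)) + 1
  · refine ⟨(s, 0), by simp, ?_⟩
    rw [colr_zero _ _ (Fin.val_zero n), hk]
  · set t : ℕ := (k - (s.val : ZMod (n-1))).val with ht
    have htlt : t < n - 1 := ZMod.val_lt _
    have htcast : ((t : ℕ) : ZMod (n-1)) = k - (s.val : ZMod (n-1)) :=
      ZMod.natCast_rightInverse _
    have hts : t ≠ s.val + 1 := by
      intro h
      apply hk
      rw [h] at htcast
      push_cast at htcast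
      linear_combination -htcast
    rcases Nat.eq_zero_or_pos t with ht0 | htpos
    · -- t = 0, k = s
      have hks : k = (s.val : ZMod (n-1)) := by
        rw [ht0] at htcast; push_cast at htcast; linear_combination -htcast
      by_cases hs : s.val = n - 1
      · set j : Fin n := ⟨n-1, by omega⟩ with hj
        have hjv : j.val = n - 1 := rfl
        refine ⟨(s - j, j), by rw [sub_add_cancel], ?_⟩
        rw [colr_pos _ _ (by omega)]
        have hv : (s - j).val = 0 := by
          rw [fin_sub_val_le s j (by omega)]; omega
        have hjc : ((j.val : ℕ) : ZMod (n-1)) = 0 := by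
          rw [hjv]; simpa using ZMod.natCast_self (n-1)
        rw [hv, hjc, hks]
        have : (s.val : ZMod (n-1)) = (((n-1 : ℕ)) : ZMod (n-1)) := by rw [hs]
        rw [this, ZMod.natCast_self]
        push_cast
        ring
      · have hs2 : s.val ≠ n - 2 := by
          intro h
          apply hk
          have key : ((n-2:ℕ) : ZMod (n-1)) = 2*((n-2:ℕ) : ZMod (n-1)) + 1 := by
            have e1 : 2*(n-2)+1 = (n-2) + (n-1) := by omega
            have c1 : ((2*(n-2)+1 : ℕ) : ZMod (n-1)) = ((n-2:ℕ) : ZMod (n-1)) := by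
              rw [e1]; push_cast [ZMod.natCast_self]; ring
            calc ((n-2:ℕ) : ZMod (n-1)) = ((2*(n-2)+1 : ℕ) : ZMod (n-1)) := c1.symm
              _ = 2*((n-2:ℕ) : ZMod (n-1)) + 1 := by push_cast; ring
          rw [hks, h]; exact key
        have hslt : s.val < n - 2 := by have := s.isLt; omega
        set j : Fin n := ⟨n-2, by omega⟩ with hj
        have hjv : j.val = n - 2 := rfl
        refine ⟨(s - j, j), by rw [sub_add_cancel], ?_⟩
        rw [colr_pos _ _ (by omega)]
        have hv : (s - j).val = s.val + 2 := by
          rw [fin_sub_val_gt s j (by omega)]; omega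
        rw [hv, hks, hjv]
        have e1 : s.val + 2 + 2 * (n-2) = s.val + 2 * (n-1) := by omega
        have c1 : ((s.val + 2 : ℕ) : ZMod (n-1)) + 2 * ((n-2 : ℕ) : ZMod (n-1)) =
            ((s.val + 2 + 2*(n-2) : ℕ) : ZMod (n-1)) := by push_cast; ring
        rw [c1, e1]
        push_cast [ZMod.natCast_self]
        ring
    · by_cases hts' : t ≤ s.val
      · set j : Fin n := ⟨t, by omega⟩ with hj
        have hjv : j.val = t := rfl
        refine ⟨(s - j, j), by rw [sub_add_cancel], ?_⟩
        rw [colr_pos _ _ (by omega)]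
        have hv : (s - j).val = s.val - t := by
          rw [fin_sub_val_le s j (by omega)]
        have e1 : (s.val - t) + 2 * t = s.val + t := by omega
        rw [hv, hjv]
        have c1 : ((s.val - t : ℕ) : ZMod (n-1)) + 2 * ((t : ℕ) : ZMod (n-1)) =
            (((s.val - t) + 2*t : ℕ) : ZMod (n-1)) := by push_cast; ring
        rw [c1, e1]
        push_cast
        linear_combination htcast
      · have htge : s.val + 2 ≤ t := by omega
        set j : Fin n := ⟨t - 1, by omega⟩ with hj
        have hjv : j.val = t - 1 := rfl
        refine ⟨(s - j, j), by rw [sub_add_cancel], ?_⟩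
        rw [colr_pos _ _ (by omega)]
        have hv : (s - j).val = s.val + n - (t - 1) := by
          rw [fin_sub_val_gt s j (by omega)]
        have e1 : (s.val + n - (t-1)) + 2 * (t - 1) = (s.val + t) + (n - 1) := by omega
        rw [hv, hjv]
        have c1 : ((s.val + n - (t-1) : ℕ) : ZMod (n-1)) + 2 * ((t - 1 : ℕ) : ZMod (n-1)) =
            (((s.val + n - (t-1)) + 2*(t-1) : ℕ) : ZMod (n-1)) := by push_cast; ring
        rw [c1, e1]
        push_cast [ZMod.natCast_self]
        linear_combination htcast

lemma adj_iff {n : ℕ} (a b : Fin n × Fin n) :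
    (latinGraph n (fun i j => i + j)).Adj a b ↔
      a ≠ b ∧ (a.1 = b.1 ∨ a.2 = b.2 ∨ a.1 + a.2 = b.1 + b.2) := by
  rw [latinGraph, SimpleGraph.fromRel_adj]
  constructor
  · rintro ⟨h, h2 | h2⟩ <;> exact ⟨h, by tauto⟩
  · rintro ⟨h, h2⟩; exact ⟨h, Or.inl h2⟩

open Finset in
lemma sum_fiber {n : ℕ} (S : Set (Fin n × Fin n)) (f : Fin n × Fin n → Fin n) :
    ∑ b : Fin n, (S ∩ {c | f c = b}).ncard = S.ncard := by
  classical
  have hS : S.Finite := S.toFinite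
  have key : ∀ b, (S ∩ {c | f c = b}).ncard =
      (hS.toFinset.filter (fun c => f c = b)).card := by
    intro b
    rw [Set.ncard_eq_toFinset_card _ (hS.inter_of_left _)]
    congr 1
    ext c
    simp [Set.Finite.mem_toFinset]
  simp only [key]
  rw [Set.ncard_eq_toFinset_card _ hS]
  exact (Finset.card_eq_sum_card_fiberwise (fun x _ => Finset.mem_univ (f x))).symm

lemma dom_of_hits {n : ℕ} (hpos : 0 < n) (S : Set (Fin n × Fin n))
    (hr : ∀ i, ∃ c ∈ S, c.1 = i) (hc : ∀ j, ∃ c ∈ S, c.2 = j)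
    (hs : ∀ s, ∃ c ∈ S, c.1 + c.2 = s) :
    IsKDominating (latinGraph n (fun i j => i + j)) 3 S := by
  haveI : NeZero n := ⟨by omega⟩
  intro v hv
  obtain ⟨cr, hcrS, hcr⟩ := hr v.1
  obtain ⟨cc, hccS, hcc⟩ := hc v.2
  obtain ⟨cs, hcsS, hcs⟩ := hs (v.1 + v.2)
  have hcrv : cr ≠ v := fun h => hv (h ▸ hcrS)
  have hccv : cc ≠ v := fun h => hv (h ▸ hccS)
  have hcsv : cs ≠ v := fun h => hv (h ▸ hcsS)
  have h12 : cr ≠ cc := by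
    intro h
    exact hcrv (Prod.ext hcr (h ▸ hcc))
  have h13 : cr ≠ cs := by
    intro h
    apply hcsv
    have h1 : cs.1 = v.1 := h ▸ hcr
    have h2 : cs.2 = v.2 := by
      have := hcs; rw [h1] at this; exact add_left_cancel this
    exact Prod.ext h1 h2
  have h23 : cc ≠ cs := by
    intro h
    apply hcsv
    have h2 : cs.2 = v.2 := h ▸ hcc
    have h1 : cs.1 = v.1 := by
      have := hcs; rw [h2] at this; exact add_right_cancel this
    exact Prod.ext h1 h2
  have hsub : ({cr, cc, cs} : Set (Fin n × Fin n)) ⊆ S ∩ (latinGraph n (fun i j => i + j)).neighborSet v := by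
    intro c hc'
    rcases hc' with h | h | h <;> subst h
    · exact ⟨hcrS, by rw [SimpleGraph.mem_neighborSet, adj_iff]; exact ⟨fun h => hcrv h.symm, Or.inl hcr.symm⟩⟩
    · exact ⟨hccS, by rw [SimpleGraph.mem_neighborSet, adj_iff]; exact ⟨fun h => hccv h.symm, Or.inr (Or.inl hcc.symm)⟩⟩
    · exact ⟨hcsS, by rw [SimpleGraph.mem_neighborSet, adj_iff]; exact ⟨fun h => hcsv h.symm, Or.inr (Or.inr hcs.symm)⟩⟩
  calc (3 : ℕ) = ({cr, cc, cs} : Set (Fin n × Fin n)).ncard := by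
        symm; rw [Set.ncard_eq_three]; exact ⟨cr, cc, cs, h12, h13, h23, rfl⟩
    _ ≤ _ := Set.ncard_le_ncard hsub (Set.toFinite _)



lemma rows_occupied {n : ℕ} (hpos : 0 < n) (S : Set (Fin n × Fin n))
    (hd : IsKDominating (latinGraph n (fun i j => i + j)) 3 S)
    (hcard : S.ncard ≤ n) (a : Fin n) : ∃ c ∈ S, c.1 = a := by
  haveI : NeZero n := ⟨by omega⟩
  by_contra h
  push_neg at h
  have key : ∀ b : Fin n,
      3 ≤ (S ∩ {c | c.2 = b}).ncard + (S ∩ {c | c.1 + c.2 = a + b}).ncard := by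
    intro b
    have hv : (a, b) ∉ S := fun hmem => h _ hmem rfl
    refine le_trans (hd (a,b) hv)
      (le_trans (Set.ncard_le_ncard ?_ (Set.toFinite _)) (Set.ncard_union_le _ _))
    rintro c ⟨hcS, hcN⟩
    rw [SimpleGraph.mem_neighborSet, adj_iff] at hcN
    obtain ⟨hne, h1 | h2 | h3⟩ := hcN
    · exact absurd h1.symm (h c hcS)
    · exact Or.inl ⟨hcS, h2.symm⟩
    · exact Or.inr ⟨hcS, h3.symm⟩
  have hsum : 3 * n ≤ 2 * S.ncard := by
    calc 3 * n = ∑ _b : Fin n, 3 := by simp [mul_comm]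
      _ ≤ ∑ b : Fin n, ((S ∩ {c | c.2 = b}).ncard + (S ∩ {c | c.1 + c.2 = a + b}).ncard) :=
          Finset.sum_le_sum (fun b _ => key b)
      _ = (∑ b : Fin n, (S ∩ {c | c.2 = b}).ncard)
          + ∑ b : Fin n, (S ∩ {c | c.1 + c.2 = a + b}).ncard := Finset.sum_add_distrib
      _ = S.ncard + S.ncard := by
          rw [sum_fiber S (fun c => c.2)]
          congr 1
          rw [← sum_fiber S (fun c => c.1 + c.2)]
          exact Fintype.sum_equiv (Equiv.addLeft a) _ _ (fun b => rfl)
      _ = 2 * S.ncard := by ring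
  omega

lemma cols_occupied {n : ℕ} (hpos : 0 < n) (S : Set (Fin n × Fin n))
    (hd : IsKDominating (latinGraph n (fun i j => i + j)) 3 S)
    (hcard : S.ncard ≤ n) (a : Fin n) : ∃ c ∈ S, c.2 = a := by
  haveI : NeZero n := ⟨by omega⟩
  by_contra h
  push_neg at h
  have key : ∀ b : Fin n,
      3 ≤ (S ∩ {c | c.1 = b}).ncard + (S ∩ {c | c.1 + c.2 = b + a}).ncard := by
    intro b
    have hv : (b, a) ∉ S := fun hmem => h _ hmem rfl
    refine le_trans (hd (b,a) hv)
      (le_trans (Set.ncard_le_ncard ?_ (Set.toFinite _)) (Set.ncard_union_le _ _))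
    rintro c ⟨hcS, hcN⟩
    rw [SimpleGraph.mem_neighborSet, adj_iff] at hcN
    obtain ⟨hne, h1 | h2 | h3⟩ := hcN
    · exact Or.inl ⟨hcS, h1.symm⟩
    · exact absurd h2.symm (h c hcS)
    · exact Or.inr ⟨hcS, h3.symm⟩
  have hsum : 3 * n ≤ 2 * S.ncard := by
    calc 3 * n = ∑ _b : Fin n, 3 := by simp [mul_comm]
      _ ≤ ∑ b : Fin n, ((S ∩ {c | c.1 = b}).ncard + (S ∩ {c | c.1 + c.2 = b + a}).ncard) :=
          Finset.sum_le_sum (fun b _ => key b)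
      _ = (∑ b : Fin n, (S ∩ {c | c.1 = b}).ncard)
          + ∑ b : Fin n, (S ∩ {c | c.1 + c.2 = b + a}).ncard := Finset.sum_add_distrib
      _ = S.ncard + S.ncard := by
          rw [sum_fiber S (fun c => c.1)]
          congr 1
          rw [← sum_fiber S (fun c => c.1 + c.2)]
          exact Fintype.sum_equiv (Equiv.addRight a) _ _ (fun b => rfl)
      _ = 2 * S.ncard := by ring
  omega

lemma syms_occupied {n : ℕ} (hpos : 0 < n) (S : Set (Fin n × Fin n))
    (hd : IsKDominating (latinGraph n (fun i j => i + j)) 3 S)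
    (hcard : S.ncard ≤ n) (a : Fin n) : ∃ c ∈ S, c.1 + c.2 = a := by
  haveI : NeZero n := ⟨by omega⟩
  by_contra h
  push_neg at h
  have key : ∀ b : Fin n,
      3 ≤ (S ∩ {c | c.1 = b}).ncard + (S ∩ {c | c.2 = a - b}).ncard := by
    intro b
    have hvsym : b + (a - b) = a := by rw [add_comm, sub_add_cancel]
    have hv : (b, a - b) ∉ S := fun hmem => h _ hmem hvsym
    refine le_trans (hd (b, a - b) hv)
      (le_trans (Set.ncard_le_ncard ?_ (Set.toFinite _)) (Set.ncard_union_le _ _))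
    rintro c ⟨hcS, hcN⟩
    rw [SimpleGraph.mem_neighborSet, adj_iff] at hcN
    obtain ⟨hne, h1 | h2 | h3⟩ := hcN
    · exact Or.inl ⟨hcS, h1.symm⟩
    · exact Or.inr ⟨hcS, h2.symm⟩
    · rw [hvsym] at h3; exact absurd h3.symm (h c hcS)
  have hsum : 3 * n ≤ 2 * S.ncard := by
    calc 3 * n = ∑ _b : Fin n, 3 := by simp [mul_comm]
      _ ≤ ∑ b : Fin n, ((S ∩ {c | c.1 = b}).ncard + (S ∩ {c | c.2 = a - b}).ncard) :=
          Finset.sum_le_sum (fun b _ => key b)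
      _ = (∑ b : Fin n, (S ∩ {c | c.1 = b}).ncard)
          + ∑ b : Fin n, (S ∩ {c | c.2 = a - b}).ncard := Finset.sum_add_distrib
      _ = S.ncard + S.ncard := by
          rw [sum_fiber S (fun c => c.1)]
          congr 1
          rw [← sum_fiber S (fun c => c.2)]
          exact Fintype.sum_equiv (Equiv.subLeft a) _ _ (fun b => rfl)
      _ = 2 * S.ncard := by ring
  omega

lemma card_lb {n : ℕ} (hn : Even n) (hpos : 0 < n) (S : Set (Fin n × Fin n))
    (hd : IsKDominating (latinGraph n (fun i j => i + j)) 3 S) : n + 1 ≤ S.ncard := by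
  classical
  by_contra hlt
  push_neg at hlt
  have hcard : S.ncard ≤ n := by omega
  haveI : NeZero n := ⟨by omega⟩
  have hS : S.Finite := S.toFinite
  set T := hS.toFinset with hT
  have hTcard : T.card ≤ n := by rw [← Set.ncard_eq_toFinset_card _ hS]; exact hcard
  have main : ∀ f : Fin n × Fin n → Fin n, (∀ x, ∃ c ∈ S, f c = x) →
      ∑ c ∈ T, (f c).val = ∑ x : Fin n, x.val := by
    intro f hsurj
    have himg : T.image f = Finset.univ := by
      ext x
      simp only [Finset.mem_image, Finset.mem_univ, iff_true]
      obtain ⟨c, hcS, hcf⟩ := hsurj x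
      exact ⟨c, (Set.Finite.mem_toFinset hS).mpr hcS, hcf⟩
    have hcardim : (T.image f).card = T.card := by
      have h1 : (T.image f).card = n := by rw [himg]; simp
      have h2 : (T.image f).card ≤ T.card := Finset.card_image_le
      omega
    have hinj : Set.InjOn f ↑T := Finset.card_image_iff.mp hcardim
    have := Finset.sum_image (f := fun x : Fin n => x.val) (g := f) (s := T)
      (fun x hx y hy hxy => hinj hx hy hxy)
    rw [himg] at this
    exact this.symm
  have hA1 := main (fun c => c.1) (rows_occupied hpos S hd hcard)
  have hA2 := main (fun c => c.2) (cols_occupied hpos S hd hcard)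
  have hB := main (fun c => c.1 + c.2) (syms_occupied hpos S hd hcard)
  set G := ∑ x : Fin n, x.val with hG
  set W := ∑ c ∈ T, ((c.1.val + c.2.val) / n) with hW
  have hdecomp : ∑ c ∈ T, (c.1.val + c.2.val) = G + n * W := by
    have : ∀ c : Fin n × Fin n, c.1.val + c.2.val = ((c.1 + c.2 : Fin n)).val + n * ((c.1.val + c.2.val)/n) := by
      intro c
      rw [Fin.val_add]
      exact (Nat.mod_add_div _ n).symm
    rw [Finset.sum_congr rfl (fun c _ => this c), Finset.sum_add_distrib, hB, Finset.mul_sum]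
  have hsplit : ∑ c ∈ T, (c.1.val + c.2.val) = G + G := by
    rw [Finset.sum_add_distrib, hA1, hA2]
  have hGnW : G = n * W := by omega
  have hGauss : 2 * G = n * (n - 1) := by
    have := Finset.sum_range_id_mul_two n
    have h2 : G = ∑ i ∈ Finset.range n, i := Fin.sum_univ_eq_sum_range (fun i => i) n
    omega
  have h2W : n * (2 * W) = n * (n - 1) := by
    rw [← hGauss, hGnW]; ring
  have := Nat.eq_of_mul_eq_mul_left hpos h2W
  obtain ⟨a, ha⟩ := hn
  omega


end Stmt17

theorem stmt17 (n : ℕ) (hn : Even n) (hpos : 0 < n) :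
    domatic3 n (fun i j => i + j) = n - 1 ∧ n ^ 2 / (n + 1) = n - 1 := by
  have h2n : 2 ≤ n := by obtain ⟨a, ha⟩ := hn; omega
  haveI : NeZero n := ⟨by omega⟩
  haveI : NeZero (n - 1) := ⟨by omega⟩
  constructor
  · -- domatic3 = n - 1
    classical
    set A := {t | ∃ P : Fin t → Set (Fin n × Fin n),
      (Pairwise fun a b => Disjoint (P a) (P b)) ∧ (⋃ i, P i) = Set.univ ∧
      ∀ i, IsKDominating (latinGraph n (fun i j => i + j)) 3 (P i)} with hA
    have hmem : n - 1 ∈ A := by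
      refine ⟨fun k => {c | Stmt17.colr n c = ((k.val : ℕ) : ZMod (n-1))}, ?_, ?_, ?_⟩
      · intro a b hab
        rw [Set.disjoint_left]
        intro c hca hcb
        apply hab
        have h1 : ((a.val : ℕ) : ZMod (n-1)) = ((b.val : ℕ) : ZMod (n-1)) := by
          rw [← hca, ← hcb]
        have h2 := congrArg ZMod.val h1
        rw [ZMod.val_cast_of_lt a.isLt, ZMod.val_cast_of_lt b.isLt] at h2
        exact Fin.ext h2
      · ext c
        simp only [Set.mem_iUnion, Set.mem_univ, iff_true]
        refine ⟨⟨(Stmt17.colr n c).val, ZMod.val_lt _⟩, ?_⟩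
        show Stmt17.colr n c = _
        exact (ZMod.natCast_rightInverse (Stmt17.colr n c)).symm
      · intro k
        apply Stmt17.dom_of_hits hpos
        · intro i
          obtain ⟨j, hj⟩ := Stmt17.row_surj hn h2n i ((k.val : ℕ) : ZMod (n-1))
          exact ⟨(i, j), hj, rfl⟩
        · intro j
          obtain ⟨i, hi⟩ := Stmt17.col_surj hn h2n j ((k.val : ℕ) : ZMod (n-1))
          exact ⟨(i, j), hi, rfl⟩
        · intro s
          obtain ⟨c, hc1, hc2⟩ := Stmt17.sym_surj hn h2n s ((k.val : ℕ) : ZMod (n-1))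
          exact ⟨c, hc2, hc1⟩
    have hub : ∀ t ∈ A, t ≤ n - 1 := by
      intro t ht
      obtain ⟨P, hdisj, hcover, hdom⟩ := ht
      set F : Fin t → Finset (Fin n × Fin n) := fun i => (P i).toFinite.toFinset with hF
      have hdisjF : ∀ i ∈ Finset.univ, ∀ j ∈ Finset.univ, i ≠ j → Disjoint (F i) (F j) := by
        intro i _ j _ hij
        rw [hF]
        simp only [Set.Finite.disjoint_toFinset]
        exact hdisj hij
      have hsum : ∑ i : Fin t, (F i).card ≤ n * n := by
        rw [← Finset.card_biUnion hdisjF]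
        calc (Finset.univ.biUnion F).card ≤ Fintype.card (Fin n × Fin n) :=
              Finset.card_le_univ _
          _ = n * n := by simp
      have hlow : ∀ i : Fin t, n + 1 ≤ (F i).card := by
        intro i
        rw [hF]
        have := Stmt17.card_lb hn hpos (P i) (hdom i)
        rwa [Set.ncard_eq_toFinset_card _ (P i).toFinite] at this
      have ht1 : t * (n + 1) ≤ n * n := by
        calc t * (n + 1) = ∑ _i : Fin t, (n + 1) := by simp [mul_comm]
          _ ≤ ∑ i : Fin t, (F i).card := Finset.sum_le_sum (fun i _ => hlow i)
          _ ≤ n * n := hsum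
      by_contra hc
      push_neg at hc
      have hnt : n ≤ t := by omega
      have : n * (n + 1) ≤ t * (n + 1) := Nat.mul_le_mul_right _ hnt
      nlinarith
    show sSup A = n - 1
    exact le_antisymm (csSup_le ⟨n - 1, hmem⟩ hub) (le_csSup ⟨n - 1, hub⟩ hmem)
  · -- arithmetic
    apply Nat.div_eq_of_lt_le
    · obtain ⟨m, rfl⟩ : ∃ m, n = m + 1 := ⟨n - 1, by omega⟩
      simp only [Nat.add_sub_cancel]
      nlinarith
    · obtain ⟨m, rfl⟩ : ∃ m, n = m + 1 := ⟨n - 1, by omega⟩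
      simp only [Nat.add_sub_cancel]
      nlinarith
end

section
/- The cyclic Latin square of even order n (Cayley table of Z_n) has a 2-transversal: explicitly, the union of the quasi-transversal S = {(i,i) : 1 ≤ i ≤ n/2} ∪ {(i,i+1) : n/2+1 ≤ i ≤ n} ∪ {(n/2+1, n/2+1)} and the near-transversal S' = {(i,i+1) : 1 ≤ i ≤ n/2} ∪ {(i,i) : n/2+2 ≤ i ≤ n} is a set of 2n cells with exactly 2 cells in each row, 2 in each column, and each symbol occurring exactly twice. -/
private lemma mod2m_cases (m x r : ℕ) (hx : x < 4 * m) (h : x % (2 * m) = r) :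
    x = r ∨ x = r + 2 * m := by
  rcases lt_or_ge x (2 * m) with h1 | h1
  · left; rw [Nat.mod_eq_of_lt h1] at h; omega
  · right; rw [Nat.mod_eq_sub_mod h1, Nat.mod_eq_of_lt (by omega)] at h; omega

theorem stmt19 (n : ℕ) (hn : Even n) (hpos : 0 < n) :
    Disjoint
      {c : Fin n × Fin n |
        (c.1.val < n / 2 ∧ c.2 = c.1) ∨
        (n / 2 ≤ c.1.val ∧ c.2.val = (c.1.val + 1) % n) ∨
        (c.1.val = n / 2 ∧ c.2 = c.1)}
      {c : Fin n × Fin n |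
        (c.1.val < n / 2 ∧ c.2.val = (c.1.val + 1) % n) ∨
        (n / 2 + 1 ≤ c.1.val ∧ c.2 = c.1)} ∧
    IsKPlex n (fun i j => i + j) 2
      ({c : Fin n × Fin n |
        (c.1.val < n / 2 ∧ c.2 = c.1) ∨
        (n / 2 ≤ c.1.val ∧ c.2.val = (c.1.val + 1) % n) ∨
        (c.1.val = n / 2 ∧ c.2 = c.1)} ∪
       {c : Fin n × Fin n |
        (c.1.val < n / 2 ∧ c.2.val = (c.1.val + 1) % n) ∨
        (n / 2 + 1 ≤ c.1.val ∧ c.2 = c.1)}) := by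
  haveI : NeZero n := ⟨hpos.ne'⟩
  obtain ⟨m, hm⟩ := hn
  have hm1 : 1 ≤ m := by omega
  have hn2 : n = 2 * m := by omega
  have hhalf : n / 2 = m := by omega
  have h1n : 1 % n = 1 := Nat.mod_eq_of_lt (by omega)
  have hval1 : ∀ a : Fin n, ((a + 1 : Fin n)).val = (a.val + 1) % n := fun a => by
    simp [Fin.add_def, Fin.val_one', Nat.add_mod_mod]
  have hmodf : ∀ v : ℕ, v < n →
      ((v + 1) % n = v + 1 ∧ v + 1 < n) ∨ ((v + 1) % n = 0 ∧ v + 1 = n) := by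
    intro v hv
    rcases lt_or_eq_of_le (Nat.succ_le_of_lt hv) with h | h
    · exact Or.inl ⟨Nat.mod_eq_of_lt h, h⟩
    · exact Or.inr ⟨by rw [show v + 1 = n from h]; exact Nat.mod_self n, h⟩
  have hmods : ∀ a b : Fin n, a.val + b.val = (a.val + b.val) % n ∨
      a.val + b.val = (a.val + b.val) % n + 2 * m := by
    intro a b
    exact mod2m_cases m _ _ (by have := a.isLt; have := b.isLt; omega) (by rw [← hn2])
  constructor
  · rw [Set.disjoint_left]
    rintro ⟨a, b⟩ h1 h2
    have ha := a.isLt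
    have hb := b.isLt
    simp only [Set.mem_setOf_eq, Fin.ext_iff, hhalf] at h1 h2
    rcases hmodf a.val ha with h | h <;> omega
  · have hU : ({c : Fin n × Fin n |
        (c.1.val < n / 2 ∧ c.2 = c.1) ∨
        (n / 2 ≤ c.1.val ∧ c.2.val = (c.1.val + 1) % n) ∨
        (c.1.val = n / 2 ∧ c.2 = c.1)} ∪
       {c : Fin n × Fin n |
        (c.1.val < n / 2 ∧ c.2.val = (c.1.val + 1) % n) ∨
        (n / 2 + 1 ≤ c.1.val ∧ c.2 = c.1)}) =
        {c : Fin n × Fin n | c.2 = c.1 ∨ c.2 = c.1 + 1} := by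
      ext ⟨a, b⟩
      have ha := a.isLt
      have hb := b.isLt
      simp only [Set.mem_union, Set.mem_setOf_eq, Fin.ext_iff, hval1, hhalf]
      rcases hmodf a.val ha with h | h <;> omega
    rw [hU]
    have hne1 : ∀ i : Fin n, i ≠ i + 1 := by
      intro i hi
      have h2 := congrArg Fin.val hi
      rw [hval1] at h2
      have hilt := i.isLt
      rcases hmodf i.val hilt with h | h <;> omega
    have h10 : (1 : Fin n) ≠ 0 := by
      intro h
      have h2 := congrArg Fin.val h
      rw [Fin.val_one', Fin.val_zero, h1n] at h2
      omega
    refine ⟨?_, ?_, ?_⟩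
    · intro i
      have hset : {c ∈ {c : Fin n × Fin n | c.2 = c.1 ∨ c.2 = c.1 + 1} | c.1 = i} =
          {(i, i), (i, i + 1)} := by
        ext ⟨a, b⟩
        simp only [Set.mem_setOf_eq, Set.mem_insert_iff, Set.mem_singleton_iff, Prod.mk.injEq]
        constructor
        · rintro ⟨hb | hb, rfl⟩
          · exact Or.inl ⟨rfl, hb⟩
          · exact Or.inr ⟨rfl, hb⟩
        · rintro (⟨rfl, rfl⟩ | ⟨rfl, rfl⟩)
          · exact ⟨Or.inl rfl, rfl⟩
          · exact ⟨Or.inr rfl, rfl⟩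
      rw [hset, Set.ncard_pair (fun h => hne1 i (congrArg Prod.snd h))]
    · intro j
      have hset : {c ∈ {c : Fin n × Fin n | c.2 = c.1 ∨ c.2 = c.1 + 1} | c.2 = j} =
          {(j, j), (j - 1, j)} := by
        ext ⟨a, b⟩
        simp only [Set.mem_setOf_eq, Set.mem_insert_iff, Set.mem_singleton_iff, Prod.mk.injEq]
        constructor
        · rintro ⟨hb | hb, rfl⟩
          · exact Or.inl ⟨hb.symm, rfl⟩
          · exact Or.inr ⟨eq_sub_of_add_eq hb.symm, rfl⟩
        · rintro (⟨h1, h2⟩ | ⟨h1, h2⟩)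
          · exact ⟨Or.inl (h2.trans h1.symm), h2⟩
          · exact ⟨Or.inr (by rw [h1, h2, sub_add_cancel]), h2⟩
      have hne2 : ((j, j) : Fin n × Fin n) ≠ (j - 1, j) := by
        intro h
        exact h10 (sub_eq_self.mp (congrArg Prod.fst h).symm)
      rw [hset, Set.ncard_pair hne2]
    · intro s
      have hs := s.isLt
      rcases Nat.even_or_odd s.val with ⟨k, hk⟩ | ⟨k, hk⟩
      · -- even symbol: cells (k,k) and (k+m, k+m)
        have hkm : k < m := by omega
        have hset : {c ∈ {c : Fin n × Fin n | c.2 = c.1 ∨ c.2 = c.1 + 1} |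
            (fun i j => i + j) c.1 c.2 = s} =
            {((⟨k, by omega⟩ : Fin n), (⟨k, by omega⟩ : Fin n)),
             ((⟨k + m, by omega⟩ : Fin n), (⟨k + m, by omega⟩ : Fin n))} := by
          ext ⟨a, b⟩
          have ha := a.isLt
          have hb := b.isLt
          have hq1 := hmodf a.val ha
          have hq2 := hmods a b
          have hq2lt : (a.val + b.val) % n < n := Nat.mod_lt _ hpos
          simp only [Set.mem_setOf_eq, Set.mem_insert_iff, Set.mem_singleton_iff,
            Prod.mk.injEq, Fin.ext_iff, Fin.val_add, hval1]
          omega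
        rw [hset, Set.ncard_pair (by
          intro h
          have h2 := congrArg (fun p : Fin n × Fin n => p.1.val) h
          simp only at h2
          omega)]
      · -- odd symbol: cells (k, k+1) and (k+m, k+m+1)
        have hkm : k < m := by omega
        have hset : {c ∈ {c : Fin n × Fin n | c.2 = c.1 ∨ c.2 = c.1 + 1} |
            (fun i j => i + j) c.1 c.2 = s} =
            {((⟨k, by omega⟩ : Fin n), (⟨k, by omega⟩ : Fin n) + 1),
             ((⟨k + m, by omega⟩ : Fin n), (⟨k + m, by omega⟩ : Fin n) + 1)} := by
          ext ⟨a, b⟩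
          have ha := a.isLt
          have hb := b.isLt
          have hq1 := hmodf a.val ha
          have hq2 := hmods a b
          have hq2lt : (a.val + b.val) % n < n := Nat.mod_lt _ hpos
          have hq3 := hmodf k (by omega)
          have hq4 := hmodf (k + m) (by omega)
          simp only [Set.mem_setOf_eq, Set.mem_insert_iff, Set.mem_singleton_iff,
            Prod.mk.injEq, Fin.ext_iff, Fin.val_add, hval1]
          omega
        rw [hset, Set.ncard_pair (by
          intro h
          have h2 := congrArg (fun p : Fin n × Fin n => p.1.val) h
          simp only at h2
          omega)]
end
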